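/- arXiv:1207.6734 — 3 statements merged into one kernel-verified Lean document; each statement's English description precedes it below -/
import Mathlib

section
/- For every M>1 there exist constants K>0 and δ>0 such that for all integers i≥1 and all θ,θ'∈[0,2π)^d, the sliced propagator C_i(θ;θ') = ∫_{M^{-2i}}^{M^{-2(i-1)}} dα e^{-αm²} ∫_0^{2π} dλ ∏_{ℓ=1}^d K_α(θ_ℓ - θ'_ℓ + λ) satisfies C_i(θ;θ') ≤ K M^{(d-2)i} ∫_0^{2π} dλ e^{-δ M^i Σ_ℓ |θ_ℓ - θ'_ℓ + λ|}, where K_α is the U(1) heat kernel at time α and |·| denotes distance on the circle. -/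
open Real MeasureTheory

/-- The heat kernel on U(1) ≅ ℝ/2πℤ at time α (winding-number representation). -/
noncomputable def heatK (α θ : ℝ) : ℝ :=
  ∑' n : ℤ, (1 / Real.sqrt (4 * π * α)) * Real.exp (-(θ + 2 * π * n) ^ 2 / (4 * α))

/-- Distance on the circle of circumference 2π. -/
noncomputable def circleDist (x : ℝ) : ℝ := sInf {y : ℝ | ∃ n : ℤ, y = |x - 2 * π * n|}

/-- The `i`-th slice (Schwinger parameter `α ∈ [M^{-2i}, M^{-2(i-1)}]`) of the
gauge-averaged propagator of the U(1)^d TGFT with gauge invariance condition. -/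
noncomputable def slicedProp (d : ℕ) (m M : ℝ) (i : ℕ) (θ θ' : Fin d → ℝ) : ℝ :=
  ∫ α in (M ^ (-(2 : ℝ) * (i : ℝ)))..(M ^ (-(2 : ℝ) * ((i : ℝ) - 1))),
    Real.exp (-α * m ^ 2) *
      ∫ lam in (0 : ℝ)..(2 * π), ∏ ℓ : Fin d, heatK α (θ ℓ - θ' ℓ + lam)



lemma circleDist_bdd (x : ℝ) : BddBelow {y : ℝ | ∃ n : ℤ, y = |x - 2 * π * n|} :=
  ⟨0, fun y ⟨n, hn⟩ => hn ▸ abs_nonneg _⟩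

lemma circleDist_nonneg (x : ℝ) : 0 ≤ circleDist x :=
  Real.sInf_nonneg (fun y ⟨n, hn⟩ => hn ▸ abs_nonneg _)

lemma circleDist_le (x : ℝ) (n : ℤ) : circleDist x ≤ |x - 2 * π * n| :=
  csInf_le (circleDist_bdd x) ⟨n, rfl⟩

lemma circleDist_le_add (x y : ℝ) : circleDist x ≤ |x - y| + circleDist y := by
  have h : circleDist x - |x - y| ≤ sInf {z : ℝ | ∃ n : ℤ, z = |y - 2 * π * n|} := by
    refine le_csInf ⟨_, ⟨0, rfl⟩⟩ ?_
    rintro b ⟨n, rfl⟩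
    have h1 : circleDist x ≤ |x - 2*π*n| := circleDist_le x n
    have h2 : |x - 2*π*n| ≤ |x - y| + |y - 2*π*n| := by
      calc |x - 2*π*n| = |(x - y) + (y - 2*π*n)| := by ring_nf
        _ ≤ |x - y| + |y - 2*π*n| := abs_add_le _ _
    linarith
  have : sInf {z : ℝ | ∃ n : ℤ, z = |y - 2 * π * n|} = circleDist y := rfl
  linarith [this ▸ h]

lemma circleDist_continuous : Continuous circleDist := by
  apply LipschitzWith.continuous (K := 1)
  apply LipschitzWith.of_dist_le_mul
  intro x y
  rw [Real.dist_eq, Real.dist_eq, NNReal.coe_one, one_mul]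
  rw [abs_sub_le_iff]
  constructor
  · have := circleDist_le_add x y; linarith
  · have := circleDist_le_add y x; rw [abs_sub_comm] at this; linarith

noncomputable def Tsum : ℝ := ∑' n : ℤ, Real.exp (-|(n : ℝ)|)

lemma exp_neg_abs_eq (n : ℤ) : Real.exp (-|(n : ℝ)|) = Real.exp (-1) ^ n.natAbs := by
  rw [← Real.exp_nat_mul]
  congr 1
  rw [Nat.cast_natAbs]
  push_cast
  ring

lemma summable_exp_neg_abs : Summable fun n : ℤ => Real.exp (-|(n : ℝ)|) := by
  have hgeo : Summable fun k : ℕ => Real.exp (-1) ^ k :=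
    summable_geometric_of_lt_one (Real.exp_nonneg _) (by
      rw [Real.exp_lt_one_iff]; norm_num)
  apply Summable.of_nat_of_neg
  · exact hgeo.congr fun k => by rw [exp_neg_abs_eq]; simp
  · exact hgeo.congr fun k => by rw [exp_neg_abs_eq]; simp

lemma one_le_Tsum : (1:ℝ) ≤ Tsum := by
  have h := Summable.le_tsum summable_exp_neg_abs 0 (fun j _ => Real.exp_nonneg _)
  simpa [Tsum] using h


lemma heatK_nonneg (α θ : ℝ) : 0 ≤ heatK α θ :=
  tsum_nonneg fun n => by positivity

lemma sq_lb (x : ℝ) (hx1 : -(2*π) ≤ x) (hx2 : x ≤ 4*π) (n : ℤ) :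
    8*(|(n:ℝ)| - 2) ≤ (x + 2*π*n)^2 := by
  have hπ := Real.pi_gt_three
  rcases le_or_gt (|(n:ℝ)|) 2 with h | h
  · nlinarith [sq_nonneg (x + 2*π*n)]
  · have h3 : (3:ℝ) ≤ |(n:ℝ)| := by
      have h2 : (2:ℤ) < |n| := by exact_mod_cast (by rw [Int.cast_abs] ; exact h : (2:ℝ) < ((|n|:ℤ):ℝ))
      have h3' : (3:ℤ) ≤ |n| := h2
      exact_mod_cast (by exact_mod_cast h3' : (3:ℝ) ≤ ((|n|:ℤ):ℝ))
    rcases le_or_gt 0 (n:ℝ) with hn | hn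
    · have hna : |(n:ℝ)| = (n:ℝ) := abs_of_nonneg hn
      rw [hna] at h3 ⊢
      have h1 : 2*π*((n:ℝ)-1) ≤ x + 2*π*n := by nlinarith
      have h2 : 0 ≤ 2*π*((n:ℝ)-1) := by nlinarith
      have h4 := mul_self_le_mul_self h2 h1
      have h5 : 36*((n:ℝ)-1)^2 ≤ (2*π*((n:ℝ)-1))*(2*π*((n:ℝ)-1)) := by
        nlinarith [sq_nonneg ((n:ℝ)-1), mul_pos (show (0:ℝ) < π-3 by linarith) (show (0:ℝ) < π+3 by linarith)]
      have h6 : 8*((n:ℝ)-2) ≤ 36*((n:ℝ)-1)^2 := by nlinarith [sq_nonneg ((n:ℝ)-1)]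
      nlinarith
    · have hna : |(n:ℝ)| = -(n:ℝ) := abs_of_neg hn
      rw [hna] at h3 ⊢
      have h1 : 2*π*(-(n:ℝ)-2) ≤ -(x + 2*π*n) := by nlinarith
      have h2 : 0 ≤ 2*π*(-(n:ℝ)-2) := by nlinarith
      have h4 := mul_self_le_mul_self h2 h1
      have h5 : 36*(-(n:ℝ)-2)^2 ≤ (2*π*(-(n:ℝ)-2))*(2*π*(-(n:ℝ)-2)) := by
        nlinarith [sq_nonneg (-(n:ℝ)-2), mul_pos (show (0:ℝ) < π-3 by linarith) (show (0:ℝ) < π+3 by linarith)]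
      have h6 : 8*(-(n:ℝ)-2) ≤ 36*(-(n:ℝ)-2)^2 := by nlinarith [sq_nonneg (-(n:ℝ)-2)]
      nlinarith

lemma heatK_bound (M t α x : ℝ) (hM : 1 < M) (htM : M ≤ t)
    (hα₁ : 1 ≤ t^2 * α) (hα₂ : t^2 * α ≤ M^2)
    (hx1 : -(2*π) ≤ x) (hx2 : x ≤ 4*π) :
    heatK α x ≤ Real.exp 2 * Tsum * Real.exp (2*M^2) / Real.sqrt (4*π) *
      (t * Real.exp (-(t * circleDist x))) := by
  have hπ : 0 < π := Real.pi_pos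
  have ht0 : 0 < t := lt_of_lt_of_le (by linarith) htM
  have ht2 : 0 < t^2 := by positivity
  have hα0 : 0 < α := by nlinarith
  have hM2t2 : M^2 ≤ t^2 := by nlinarith
  have hα1 : α ≤ 1 := by nlinarith
  set ρ := circleDist x with hρdef
  have hρ0 : 0 ≤ ρ := circleDist_nonneg x
  have hρn : ∀ n : ℤ, ρ ≤ |x + 2*π*n| := by
    intro n
    have h := circleDist_le x (-n)
    push_cast at h
    have : x - 2*π*(-(n:ℝ)) = x + 2*π*n := by ring
    rwa [this] at h
  have hT : (0:ℝ) ≤ Tsum := le_trans zero_le_one one_le_Tsum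
  have key : ∀ n : ℤ, (1/Real.sqrt (4*π*α)) * Real.exp (-(x+2*π*n)^2/(4*α)) ≤
      (1/Real.sqrt (4*π*α)) * (Real.exp (-ρ^2/(8*α)) * (Real.exp 2 * Real.exp (-|(n:ℝ)|))) := by
    intro n
    apply mul_le_mul_of_nonneg_left _ (by positivity)
    have hsplit : Real.exp (-(x+2*π*n)^2/(4*α)) =
        Real.exp (-(x+2*π*n)^2/(8*α)) * Real.exp (-(x+2*π*n)^2/(8*α)) := by
      rw [← Real.exp_add]; congr 1; field_simp; ring
    rw [hsplit]
    apply mul_le_mul _ _ (Real.exp_nonneg _) (by positivity)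
    · apply Real.exp_le_exp.2
      have hsq : ρ^2 ≤ (x+2*π*n)^2 := by
        have := pow_le_pow_left₀ hρ0 (hρn n) 2
        rwa [sq_abs] at this
      rw [neg_div, neg_div, neg_le_neg_iff]
      gcongr
    · rw [← Real.exp_add]
      apply Real.exp_le_exp.2
      have hq := sq_lb x hx1 hx2 n
      have h8 : (x+2*π*n)^2/8 ≤ (x+2*π*n)^2/(8*α) := by
        apply div_le_div_of_nonneg_left (sq_nonneg _) (by positivity)
        linarith
      have h9 : |(n:ℝ)| - 2 ≤ (x+2*π*n)^2/8 := by linarith [hq]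
      rw [neg_div]
      linarith
  have hS2 : Summable (fun n : ℤ =>
      (1/Real.sqrt (4*π*α)) * (Real.exp (-ρ^2/(8*α)) * (Real.exp 2 * Real.exp (-|(n:ℝ)|)))) := by
    exact ((summable_exp_neg_abs.mul_left _).mul_left _).mul_left _
  have hS1 : Summable (fun n : ℤ =>
      (1/Real.sqrt (4*π*α)) * Real.exp (-(x+2*π*n)^2/(4*α))) :=
    Summable.of_nonneg_of_le (fun n => by positivity) key hS2
  have hle : heatK α x ≤ (1/Real.sqrt (4*π*α)) * (Real.exp (-ρ^2/(8*α)) * (Real.exp 2 * Tsum)) := by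
    have := Summable.tsum_le_tsum key hS1 hS2
    rw [heatK]
    calc (∑' n : ℤ, (1/Real.sqrt (4*π*α)) * Real.exp (-(x+2*π*n)^2/(4*α))) ≤ _ := this
      _ = (1/Real.sqrt (4*π*α)) * (Real.exp (-ρ^2/(8*α)) * (Real.exp 2 * Tsum)) := by
        rw [tsum_mul_left, tsum_mul_left, tsum_mul_left]; rfl
  have hA : 1/Real.sqrt (4*π*α) ≤ t/Real.sqrt (4*π) := by
    have hsplit : Real.sqrt (4*π*α) = Real.sqrt (4*π) * Real.sqrt α :=
      Real.sqrt_mul (by positivity) α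
    have h1 : Real.sqrt (4*π)/t ≤ Real.sqrt (4*π*α) := by
      rw [hsplit]
      have h2 : (1/t)^2 ≤ α := by
        rw [div_pow, one_pow, div_le_iff₀ ht2]; linarith
      have h3 : 1/t ≤ Real.sqrt α := by
        have := Real.sqrt_le_sqrt h2
        rwa [Real.sqrt_sq (by positivity)] at this
      calc Real.sqrt (4*π)/t = Real.sqrt (4*π) * (1/t) := by ring
        _ ≤ Real.sqrt (4*π) * Real.sqrt α := by
          apply mul_le_mul_of_nonneg_left h3 (Real.sqrt_nonneg _)
    calc 1/Real.sqrt (4*π*α) ≤ 1/(Real.sqrt (4*π)/t) :=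
        one_div_le_one_div_of_le (by positivity) h1
      _ = t/Real.sqrt (4*π) := one_div_div _ _
  have hB : Real.exp (-ρ^2/(8*α)) ≤ Real.exp (2*M^2) * Real.exp (-(t*ρ)) := by
    rw [← Real.exp_add]
    apply Real.exp_le_exp.2
    have hM0 : (0:ℝ) < M := by linarith
    have hαle : α ≤ M^2/t^2 := by rw [le_div_iff₀ ht2]; linarith [hα₂]
    have h1 : ρ^2/(8*(M^2/t^2)) ≤ ρ^2/(8*α) := by
      apply div_le_div_of_nonneg_left (sq_nonneg _) (by positivity)
      nlinarith
    have h2 : ρ^2/(8*(M^2/t^2)) = ρ^2*t^2/(8*M^2) := by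
      field_simp
    have h3 : t*ρ - 2*M^2 ≤ ρ^2*t^2/(8*M^2) := by
      rw [le_div_iff₀ (by positivity)]
      nlinarith [sq_nonneg (t*ρ - 4*M^2)]
    rw [h2] at h1
    rw [neg_div]
    linarith
  calc heatK α x ≤ (1/Real.sqrt (4*π*α)) * (Real.exp (-ρ^2/(8*α)) * (Real.exp 2 * Tsum)) := hle
    _ ≤ (t/Real.sqrt (4*π)) * ((Real.exp (2*M^2) * Real.exp (-(t*ρ))) * (Real.exp 2 * Tsum)) := by
      apply mul_le_mul hA (mul_le_mul_of_nonneg_right hB (by positivity)) (by positivity) (by positivity)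
    _ = Real.exp 2 * Tsum * Real.exp (2*M^2) / Real.sqrt (4*π) * (t * Real.exp (-(t*ρ))) := by
      ring

/-- **Sliced propagator bound.** For every `M > 1` there are constants `K, δ > 0` such that
for all `i ≥ 1` and all `θ, θ' ∈ [0,2π)^d`,
`C_i(θ;θ') ≤ K M^{(d-2)i} ∫ dλ e^{-δ M^i Σ_ℓ |θ_ℓ - θ'_ℓ + λ|}`
with `|·|` the distance on the circle. -/
theorem sliced_propagator_bound (d : ℕ) (m : ℝ) (hm : 0 < m) (M : ℝ) (hM : 1 < M) :
    ∃ K > (0 : ℝ), ∃ δ > (0 : ℝ), ∀ i : ℕ, 1 ≤ i →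
      ∀ θ θ' : Fin d → ℝ,
        (∀ ℓ, θ ℓ ∈ Set.Ico (0 : ℝ) (2 * π)) →
        (∀ ℓ, θ' ℓ ∈ Set.Ico (0 : ℝ) (2 * π)) →
        slicedProp d m M i θ θ' ≤
          K * M ^ (((d : ℝ) - 2) * (i : ℝ)) *
            ∫ lam in (0 : ℝ)..(2 * π),
              Real.exp (-δ * M ^ (i : ℝ) * ∑ ℓ : Fin d, circleDist (θ ℓ - θ' ℓ + lam)) := by
  have hπ : 0 < π := Real.pi_pos
  have hM0 : 0 < M := by linarith
  have hT : (0:ℝ) ≤ Tsum := le_trans zero_le_one one_le_Tsum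
  set C₁ : ℝ := Real.exp 2 * Tsum * Real.exp (2*M^2) / Real.sqrt (4*π) with hC₁
  have hC₁0 : 0 < C₁ := by
    apply div_pos _ (Real.sqrt_pos.2 (by positivity))
    exact mul_pos (mul_pos (Real.exp_pos 2) (lt_of_lt_of_le one_pos one_le_Tsum)) (Real.exp_pos _)
  refine ⟨M^2 * C₁^d, by positivity, 1, one_pos, ?_⟩
  intro i hi θ θ' hθ hθ'
  set t : ℝ := M ^ (i:ℝ) with htdef
  have ht0 : 0 < t := Real.rpow_pos_of_pos hM0 _
  have htM : M ≤ t := by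
    calc M = M ^ (1:ℝ) := (Real.rpow_one M).symm
      _ ≤ M ^ (i:ℝ) := Real.rpow_le_rpow_of_exponent_le (le_of_lt hM) (by exact_mod_cast hi)
  set a : ℝ := M ^ (-(2:ℝ) * (i:ℝ)) with hadef
  set b : ℝ := M ^ (-(2:ℝ) * ((i:ℝ) - 1)) with hbdef
  have ha0 : 0 < a := Real.rpow_pos_of_pos hM0 _
  have hab : a ≤ b := by
    apply Real.rpow_le_rpow_of_exponent_le (le_of_lt hM)
    linarith [ (by positivity : (0:ℝ) < 1) ]
  have ht2a : t^2 * a = 1 := by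
    rw [htdef, hadef, sq, ← Real.rpow_add hM0, ← Real.rpow_add hM0,
      show (i:ℝ) + (i:ℝ) + (-(2:ℝ)*(i:ℝ)) = 0 by ring, Real.rpow_zero]
  have ht2b : t^2 * b = M^2 := by
    rw [htdef, hbdef, sq, ← Real.rpow_add hM0, ← Real.rpow_add hM0,
      show (i:ℝ) + (i:ℝ) + (-(2:ℝ)*((i:ℝ)-1)) = (2:ℝ) by ring,
      show ((2:ℝ)) = ((2:ℕ):ℝ) by norm_num, Real.rpow_natCast]
  have hI0 : 0 ≤ ∫ lam in (0:ℝ)..(2*π),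
      Real.exp (-1 * t * ∑ ℓ : Fin d, circleDist (θ ℓ - θ' ℓ + lam)) :=
    intervalIntegral.integral_nonneg (by positivity) (fun u _ => Real.exp_nonneg _)
  set I : ℝ := ∫ lam in (0:ℝ)..(2*π),
      Real.exp (-1 * t * ∑ ℓ : Fin d, circleDist (θ ℓ - θ' ℓ + lam)) with hIdef
  set D : ℝ := (C₁*t)^d * I with hDdef
  have hD0 : 0 ≤ D := mul_nonneg (by positivity) hI0
  have hpt : ∀ α ∈ Set.Icc a b,
      Real.exp (-α * m^2) *
        (∫ lam in (0:ℝ)..(2*π), ∏ ℓ : Fin d, heatK α (θ ℓ - θ' ℓ + lam)) ≤ D := by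
    intro α hα
    have hα0 : 0 < α := lt_of_lt_of_le ha0 hα.1
    have hX0 : 0 ≤ ∫ lam in (0:ℝ)..(2*π), ∏ ℓ : Fin d, heatK α (θ ℓ - θ' ℓ + lam) :=
      intervalIntegral.integral_nonneg (by positivity)
        (fun u _ => Finset.prod_nonneg fun ℓ _ => heatK_nonneg _ _)
    have hexp1 : Real.exp (-α * m^2) ≤ 1 := by
      rw [Real.exp_le_one_iff]
      nlinarith [sq_nonneg m]
    have hXD : (∫ lam in (0:ℝ)..(2*π), ∏ ℓ : Fin d, heatK α (θ ℓ - θ' ℓ + lam)) ≤ D := by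
      by_cases hint : IntervalIntegrable
          (fun lam => ∏ ℓ : Fin d, heatK α (θ ℓ - θ' ℓ + lam)) volume 0 (2*π)
      · have hcont : Continuous fun lam : ℝ =>
            (C₁*t)^d * Real.exp (-1 * t * ∑ ℓ : Fin d, circleDist (θ ℓ - θ' ℓ + lam)) := by
          apply Continuous.mul continuous_const
          apply Real.continuous_exp.comp
          apply Continuous.mul continuous_const
          apply continuous_finset_sum
          intro ℓ _
          exact circleDist_continuous.comp (by continuity)
        calc (∫ lam in (0:ℝ)..(2*π), ∏ ℓ : Fin d, heatK α (θ ℓ - θ' ℓ + lam))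
            ≤ ∫ lam in (0:ℝ)..(2*π),
                (C₁*t)^d * Real.exp (-1 * t * ∑ ℓ : Fin d, circleDist (θ ℓ - θ' ℓ + lam)) := by
              apply intervalIntegral.integral_mono_on (by positivity) hint
                (hcont.intervalIntegrable _ _)
              intro lam hlam
              calc ∏ ℓ : Fin d, heatK α (θ ℓ - θ' ℓ + lam)
                  ≤ ∏ ℓ : Fin d,
                      (C₁ * (t * Real.exp (-(t * circleDist (θ ℓ - θ' ℓ + lam))))) := by
                    apply Finset.prod_le_prod (fun ℓ _ => heatK_nonneg _ _)
                    intro ℓ _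
                    apply heatK_bound M t α _ hM htM
                    · have h := mul_le_mul_of_nonneg_left hα.1 (sq_nonneg t)
                      linarith [ht2a]
                    · have h := mul_le_mul_of_nonneg_left hα.2 (sq_nonneg t)
                      linarith [ht2b]
                    · have h1 := (hθ ℓ).1
                      have h2 := (hθ' ℓ).2
                      have h3 := hlam.1
                      linarith
                    · have h1 := (hθ ℓ).2
                      have h2 := (hθ' ℓ).1
                      have h3 := hlam.2
                      linarith
                _ = (C₁*t)^d *
                      Real.exp (-1 * t * ∑ ℓ : Fin d, circleDist (θ ℓ - θ' ℓ + lam)) := by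
                    simp only [← mul_assoc]
                    rw [Finset.prod_mul_distrib, Finset.prod_const, Finset.card_univ,
                      Fintype.card_fin, ← Real.exp_sum]
                    congr 1
                    rw [Finset.sum_neg_distrib, ← Finset.mul_sum]
                    congr 1
                    ring
          _ = D := by rw [hDdef, hIdef, intervalIntegral.integral_const_mul]
      · rw [intervalIntegral.integral_undef hint]
        exact hD0
    calc Real.exp (-α * m^2) *
          (∫ lam in (0:ℝ)..(2*π), ∏ ℓ : Fin d, heatK α (θ ℓ - θ' ℓ + lam))
        ≤ 1 * (∫ lam in (0:ℝ)..(2*π), ∏ ℓ : Fin d, heatK α (θ ℓ - θ' ℓ + lam)) :=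
          mul_le_mul_of_nonneg_right hexp1 hX0
      _ = _ := one_mul _
      _ ≤ D := hXD
  have hcoef : M ^ (((d:ℝ)-2) * (i:ℝ)) = t^d / t^2 := by
    rw [htdef, ← Real.rpow_natCast (M ^ ((i:ℕ):ℝ)) d, ← Real.rpow_natCast (M ^ ((i:ℕ):ℝ)) 2,
      ← Real.rpow_mul hM0.le, ← Real.rpow_mul hM0.le, ← Real.rpow_sub hM0]
    congr 1
    push_cast
    ring
  have hbval : b = M^2 / t^2 := by
    rw [eq_div_iff (ne_of_gt (by positivity))]
    linarith [ht2b]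
  rw [slicedProp]
  by_cases hint2 : IntervalIntegrable
      (fun α => Real.exp (-α * m^2) *
        ∫ lam in (0:ℝ)..(2*π), ∏ ℓ : Fin d, heatK α (θ ℓ - θ' ℓ + lam)) volume a b
  · have h1 := intervalIntegral.integral_mono_on hab hint2 intervalIntegrable_const hpt
    rw [intervalIntegral.integral_const] at h1
    calc (∫ α in a..b, Real.exp (-α * m^2) *
            ∫ lam in (0:ℝ)..(2*π), ∏ ℓ : Fin d, heatK α (θ ℓ - θ' ℓ + lam))
        ≤ (b - a) • D := h1
      _ = (b - a) * D := by rw [smul_eq_mul]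
      _ ≤ (M^2/t^2) * D := by
          apply mul_le_mul_of_nonneg_right _ hD0
          rw [← hbval]
          linarith
      _ = M^2 * C₁^d * (t^d/t^2) * I := by rw [hDdef]; ring
      _ = M^2 * C₁^d * M ^ (((d:ℝ)-2) * (i:ℝ)) * I := by rw [hcoef]
  · rw [intervalIntegral.integral_undef hint2]
    exact mul_nonneg (mul_nonneg (by positivity) (Real.rpow_nonneg hM0.le _)) hI0
end

section
/- Contraction of a subgraph is well-defined and is characterized globally: for a subgraph H of a TGFT graph G, the graph G/H obtained by successively contracting all lines of H (in any order) is equal to the graph obtained by (a) deleting all faces of G internal to H, and (b) replacing every external face of the colored extension H_c by a single line of the corresponding color. -/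
/-! Basic formal model of TGFT Feynman graphs: a rank-`d` TGFT graph is encoded through
its colored extension, a `(d+1)`-edge-colored graph.  Nodes are elements of `V`; for each
color `c : Fin (d+1)` the partial matching `edge c` pairs nodes (color `0` lines are the
propagator lines, colors `1,…,d` are the internal colored lines of the bubbles). -/
structure PreGraph (d : ℕ) (V : Type) where
  verts : Finset V
  edge : Fin (d + 1) → V → Option V

variable {d : ℕ} {V : Type}

/-- The axioms making the data a genuine `(d+1)`-colored graph: each `edge c` is a
symmetric fixed-point-free partial matching supported on the vertices, which is total
(a perfect matching) for every color `c ≠ 0`. -/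
def isColored (G : PreGraph d V) : Prop :=
  (∀ c a b, G.edge c a = some b → G.edge c b = some a) ∧
  (∀ c a b, G.edge c a = some b → a ∈ G.verts ∧ b ∈ G.verts) ∧
  (∀ c a, G.edge c a ≠ some a) ∧
  (∀ c : Fin (d + 1), c ≠ 0 → ∀ a ∈ G.verts, (G.edge c a).isSome)

/-- `p = (n, n̄)` is a (color-0, i.e. propagator) line of `G`. -/
def isLine (G : PreGraph d V) (p : V × V) : Prop := G.edge 0 p.1 = some p.2

/-- Reconnection of a matching after deletion of the two nodes `n, m`:
partners of `n` and `m` get joined to each other. -/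
def reconnect [DecidableEq V] (e : V → Option V) (n m : V) : V → Option V := fun a =>
  if a = n ∨ a = m then none
  else
    match e a with
    | none => none
    | some x =>
      if x = n then
        match e m with
        | none => none
        | some b => if b = n ∨ b = m then none else some b
      else if x = m then
        match e n with
        | none => none
        | some b => if b = n ∨ b = m then none else some b
      else some x

/-- Contraction of the color-0 line (dipole) with end nodes `n, m`: the two nodes are
deleted together with all colored lines joining them, and the remaining open half-lines
are reconnected according to their colors. -/
def contractLine [DecidableEq V] (G : PreGraph d V) (n m : V) : PreGraph d V :=
  ⟨G.verts \ {n, m}, fun c => reconnect (G.edge c) n m⟩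

/-- Successive contraction of a list of lines. -/
def contractList [DecidableEq V] : PreGraph d V → List (V × V) → PreGraph d V
  | G, [] => G
  | G, p :: r => contractList (contractLine G p.1 p.2) r

/-- One step along a face of color `c`: cross the color-`c` line then the color-0 line. -/
def faceStep (G : PreGraph d V) (c : Fin (d + 1)) (a : V) : Option V :=
  (G.edge c a).bind (G.edge 0)

/-- Iterated face steps. -/
def iterStep (G : PreGraph d V) (c : Fin (d + 1)) : ℕ → V → Option V
  | 0, a => some a
  | k + 1, a => (faceStep G c a).bind (iterStep G c k)

/-- The (oriented) color-0 line crossed by the face of color `c` right after node `b`. -/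
def crossedPair (G : PreGraph d V) (c : Fin (d + 1)) (b : V) : Option (V × V) :=
  match G.edge c b with
  | none => none
  | some x =>
    match G.edge 0 x with
    | none => none
    | some y => some (x, y)

/-- Two ordered pairs represent the same unordered line. -/
def pairMatch (p q : V × V) : Prop := p = q ∨ p = (q.2, q.1)

/-- The face of color `c` through node `a` closes with period `k` (an internal face of `G`). -/
def ClosedFace (G : PreGraph d V) (c : Fin (d + 1)) (a : V) (k : ℕ) : Prop :=
  0 < k ∧ iterStep G c k a = some a

/-- The face of color `c` (of period `k`, based at `a`) passes through the line `p`. -/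
def FaceCrosses (G : PreGraph d V) (c : Fin (d + 1)) (a : V) (k : ℕ) (p : V × V) : Prop :=
  ∃ j < k, ∃ b, iterStep G c j a = some b ∧
    ∃ xy, crossedPair G c b = some xy ∧ pairMatch xy p

/-- A closed face all of whose color-0 lines belong to the subgraph `S`
(an internal face of the subgraph `S`). -/
def ClosedFaceIn (G : PreGraph d V) (S : Finset (V × V)) (c : Fin (d + 1)) (a : V)
    (k : ℕ) : Prop :=
  ClosedFace G c a k ∧
    ∀ j < k, ∀ b, iterStep G c j a = some b →
      ∃ q ∈ S, ∃ xy, crossedPair G c b = some xy ∧ pairMatch xy q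

/-- Two lines of `S` lie on a common internal face of `S`: this realizes the line–face
incidence used to define connectedness of tensorial subgraphs. -/
def InternalFaceRel (G : PreGraph d V) (S : Finset (V × V)) (p q : V × V) : Prop :=
  ∃ c : Fin (d + 1), c ≠ 0 ∧ ∃ a k, ClosedFaceIn G S c a k ∧
    FaceCrosses G c a k p ∧ FaceCrosses G c a k q

/-- Connectedness of the subgraph `S` in the tensorial (face-incidence) sense. -/
def ConnectedSub (G : PreGraph d V) (S : Finset (V × V)) : Prop :=
  ∀ p ∈ S, ∀ q ∈ S, Relation.EqvGen (InternalFaceRel G S) p q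

/-- Two lines of `G` lie on a common closed face of `G`. -/
def WholeFaceRel (G : PreGraph d V) (p q : V × V) : Prop :=
  ∃ c : Fin (d + 1), c ≠ 0 ∧ ∃ a k, ClosedFace G c a k ∧
    FaceCrosses G c a k p ∧ FaceCrosses G c a k q

/-- Connectedness of `G` in the tensorial sense: the line–face incidence matrix does not
factorize into blocks, i.e. all pairs of lines are related through internal faces. -/
def GraphConnected (G : PreGraph d V) : Prop :=
  ∀ p q : V × V, isLine G p → isLine G q → Relation.EqvGen (WholeFaceRel G) p q

/-- Number of additional colored lines joining the two end nodes of a line: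
a line is a `k`-dipole iff this number is `k - 1`. -/
def shareCount [DecidableEq V] (G : PreGraph d V) (n m : V) : ℕ :=
  (Finset.univ.filter (fun c : Fin (d + 1) => c ≠ 0 ∧ G.edge c n = some m)).card

/-- Hepp-sector condition of a melopole: each line, in order, is (at least) a `d`-dipole
of the graph in which the previous lines have been contracted. -/
def MeloSteps [DecidableEq V] : PreGraph d V → List (V × V) → Prop
  | _, [] => True
  | G, p :: r => isLine G p ∧ d - 1 ≤ shareCount G p.1 p.2 ∧
      MeloSteps (contractLine G p.1 p.2) r

/-- Adjacency through the colored (non-0) lines: nodes of the same bubble (vertex). -/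
def ColoredAdj (G : PreGraph d V) (a b : V) : Prop :=
  ∃ c : Fin (d + 1), c ≠ 0 ∧ G.edge c a = some b

/-- Two nodes belong to the same bubble (interaction vertex). -/
def SameBubble (G : PreGraph d V) (a b : V) : Prop := Relation.EqvGen (ColoredAdj G) a b

/-- A melopole: a nonempty connected single-vertex (tadpole) subgraph whose lines admit
an ordering (Hepp sector) in which each successive quotient is a `d`-dipole. -/
def IsMelopole [DecidableEq V] (G : PreGraph d V) (S : Finset (V × V)) : Prop :=
  S.Nonempty ∧ (∀ p ∈ S, isLine G p) ∧
  (∀ p ∈ S, ∀ q ∈ S, SameBubble G p.1 q.1) ∧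
  (∀ p ∈ S, SameBubble G p.1 p.2) ∧
  ConnectedSub G S ∧
  ∃ l : List (V × V), l.Nodup ∧ l.toFinset = S ∧ MeloSteps G l

/-- Follow a face of color `c` through the deleted node set `D` until a surviving node is
reached: this replaces an external face of the contracted subgraph by a single line of
color `c`. -/
def chase [DecidableEq V] (G : PreGraph d V) (D : Finset V) (c : Fin (d + 1)) :
    ℕ → V → Option V
  | 0, _ => none
  | fuel + 1, a =>
    match G.edge c a with
    | none => none
    | some x =>
      if x ∈ D then
        match G.edge 0 x with
        | none => none
        | some y => chase G D c fuel y
      else some x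

/-- End nodes of a set of lines. -/
def endpoints [DecidableEq V] (S : Finset (V × V)) : Finset V :=
  S.image Prod.fst ∪ S.image Prod.snd

/-- The global description of the contraction of a subgraph `S`: (a) all nodes of `S`
(hence all internal faces of `S`) are deleted, and (b) every external face of the colored
extension of `S` is replaced by a single line of the corresponding color (realized by
`chase`). -/
def globalContract [DecidableEq V] (G : PreGraph d V) (S : Finset (V × V)) :
    PreGraph d V :=
  ⟨G.verts \ endpoints S,
   fun c a => if a ∈ endpoints S then none
              else chase G (endpoints S) c (2 * S.card + 2) a⟩

section Aux

variable [DecidableEq V]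

lemma chase_succ (G : PreGraph d V) (D : Finset V) (c : Fin (d + 1)) (f : ℕ) (a : V) :
    chase G D c (f + 1) a =
      match G.edge c a with
      | none => none
      | some x =>
        if x ∈ D then
          match G.edge 0 x with
          | none => none
          | some y => chase G D c f y
        else some x := rfl

lemma chase_mono (G : PreGraph d V) (D : Finset V) (c : Fin (d + 1)) :
    ∀ {f f' : ℕ} {a b : V}, f ≤ f' → chase G D c f a = some b → chase G D c f' a = some b := by
  intro f
  induction f with
  | zero => intro f' a b _ h; simp [chase] at h
  | succ f ih =>
    intro f' a b hle h
    obtain ⟨f'', rfl⟩ : ∃ f'', f' = f'' + 1 := ⟨f' - 1, by omega⟩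
    rw [chase_succ] at h ⊢
    cases hx : G.edge c a with
    | none => simp [hx] at h
    | some x =>
      simp only [hx] at h ⊢
      by_cases hxD : x ∈ D
      · simp only [if_pos hxD] at h ⊢
        cases hy : G.edge 0 x with
        | none => simp [hy] at h
        | some y =>
          simp only [hy] at h ⊢
          exact ih (by omega) h
      · simpa [hxD] using h

lemma chase_not_mem (G : PreGraph d V) (D : Finset V) (c : Fin (d + 1)) :
    ∀ {f : ℕ} {a b : V}, chase G D c f a = some b → b ∉ D := by
  intro f
  induction f with
  | zero => intro a b h; simp [chase] at h
  | succ f ih =>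
    intro a b h
    rw [chase_succ] at h
    cases hx : G.edge c a with
    | none => simp [hx] at h
    | some x =>
      simp only [hx] at h
      by_cases hxD : x ∈ D
      · simp only [if_pos hxD] at h
        cases hy : G.edge 0 x with
        | none => simp [hy] at h
        | some y => simp only [hy] at h; exact ih h
      · simp only [if_neg hxD, Option.some.injEq] at h
        exact h ▸ hxD

lemma chase_erase (G : PreGraph d V) (D : Finset V) (c : Fin (d + 1)) (x y : V)
    (hxy : G.edge 0 x = some y) :
    ∀ {f : ℕ} {z b : V}, chase G D c f z = some b →
      chase G (D.erase x) c f z = some b ∨ ∃ j < f, chase G D c j y = some b := by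
  intro f
  induction f with
  | zero => intro z b h; simp [chase] at h
  | succ f ih =>
    intro z b h
    rw [chase_succ] at h
    cases hw : G.edge c z with
    | none => simp [hw] at h
    | some w =>
      simp only [hw] at h
      by_cases hwD : w ∈ D
      · simp only [if_pos hwD] at h
        by_cases hwx : w = x
        · subst hwx
          simp only [hxy] at h
          exact Or.inr ⟨f, by omega, h⟩
        · cases hu : G.edge 0 w with
          | none => simp [hu] at h
          | some u =>
            simp only [hu] at h
            rcases ih h with h' | ⟨j, hj, hjy⟩
            · left
              rw [chase_succ]
              simp only [hw, if_pos (Finset.mem_erase.2 ⟨hwx, hwD⟩), hu]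
              exact h'
            · exact Or.inr ⟨j, by omega, hjy⟩
      · simp only [if_neg hwD, Option.some.injEq] at h
        left
        rw [chase_succ]
        simp only [hw, if_neg (fun hc => hwD (Finset.mem_of_mem_erase hc))]
        exact congrArg some h

lemma chase_lift (G : PreGraph d V) (D : Finset V) (c : Fin (d + 1)) (x : V) :
    ∀ {f : ℕ} {z b : V}, b ∉ D → chase G (D.erase x) c f z = some b →
      chase G D c f z = some b := by
  intro f
  induction f with
  | zero => intro z b _ h; simp [chase] at h
  | succ f ih =>
    intro z b hb h
    rw [chase_succ] at h ⊢
    cases hw : G.edge c z with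
    | none => simp [hw] at h
    | some w =>
      simp only [hw] at h ⊢
      by_cases hwE : w ∈ D.erase x
      · simp only [if_pos hwE] at h
        simp only [if_pos (Finset.mem_of_mem_erase hwE)]
        cases hu : G.edge 0 w with
        | none => simp [hu] at h
        | some u =>
          simp only [hu] at h ⊢
          exact ih hb h
      · simp only [if_neg hwE, Option.some.injEq] at h
        subst h
        simp only [if_neg hb]

lemma chase_bound (G : PreGraph d V) (c : Fin (d + 1)) :
    ∀ (f : ℕ) (D : Finset V) (a b : V), chase G D c f a = some b →
      chase G D c (D.card + 1) a = some b := by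
  intro f
  induction f using Nat.strong_induction_on with
  | _ f IH =>
  intro D a b h
  match f, h with
  | f + 1, h =>
    rw [chase_succ] at h
    cases hx : G.edge c a with
    | none => simp [hx] at h
    | some x =>
      simp only [hx] at h
      by_cases hxD : x ∈ D
      · simp only [if_pos hxD] at h
        cases hy : G.edge 0 x with
        | none => simp [hy] at h
        | some y =>
          simp only [hy] at h
          have hb : b ∉ D := chase_not_mem G D c h
          rcases chase_erase G D c x y hy h with h' | ⟨j, hj, hjy⟩
          · have h2 := IH f (by omega) (D.erase x) y b h'
            have h3 : chase G D c ((D.erase x).card + 1) y = some b :=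
              chase_lift G D c x hb h2
            have hcard : (D.erase x).card + 1 = D.card := by
              rw [Finset.card_erase_of_mem hxD]
              have : 0 < D.card := Finset.card_pos.2 ⟨x, hxD⟩
              omega
            rw [chase_succ]
            simp only [hx, if_pos hxD, hy, ← hcard]
            exact h3
          · have h2 : chase G D c (j + 1) a = some b := by
              rw [chase_succ]
              simp only [hx, if_pos hxD, hy]
              exact hjy
            exact IH (j + 1) (by omega) D a b h2
      · simp only [if_neg hxD, Option.some.injEq] at h
        subst h
        rw [chase_succ]
        simp [hx, hxD]

lemma reconnect_eq_some {e : V → Option V} {n m a b : V} (hnm : n ≠ m) :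
    reconnect e n m a = some b ↔
      a ≠ n ∧ a ≠ m ∧ b ≠ n ∧ b ≠ m ∧
        (e a = some b ∨ (e a = some n ∧ e m = some b) ∨ (e a = some m ∧ e n = some b)) := by
  unfold reconnect
  by_cases h1 : a = n ∨ a = m
  · simp only [if_pos h1]
    constructor
    · rintro ⟨⟩
    · rintro ⟨hn, hm, -⟩; rcases h1 with rfl | rfl <;> simp_all
  · rw [if_neg h1]
    push_neg at h1
    cases hx : e a with
    | none => simp [hx, h1.1, h1.2]
    | some x =>
      simp only [hx]
      by_cases hxn : x = n
      · subst x
        simp only [if_pos rfl]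
        cases hm : e m with
        | none =>
          simp only [hm, h1.1, h1.2, Option.some.injEq]
          constructor
          · rintro ⟨⟩
          · rintro ⟨-, -, h3, -, h | ⟨-, h⟩ | ⟨h, -⟩⟩
            · exact absurd h.symm h3
            · exact absurd h (by simp)
            · exact absurd h hnm
        | some u =>
          simp only [hm, h1.1, h1.2, Option.some.injEq, hnm]
          by_cases hu : u = n ∨ u = m
          · simp only [if_pos hu]
            constructor
            · rintro ⟨⟩
            · rintro ⟨-, -, h3, h4, h | ⟨-, h⟩ | ⟨h, -⟩⟩
              · exact absurd h.symm h3
              · rcases hu with rfl | rfl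
                · exact absurd h.symm h3
                · exact absurd h.symm h4
              · exact h.elim
          · simp only [if_neg hu]
            push_neg at hu
            constructor
            · rintro ⟨rfl⟩
              exact ⟨h1.1, h1.2, hu.1, hu.2, Or.inr (Or.inl ⟨trivial, rfl⟩)⟩
            · rintro ⟨-, -, h3, -, h | ⟨-, h⟩ | ⟨h, -⟩⟩
              · exact absurd h.symm h3
              · exact congrArg some h
              · exact h.elim
      · by_cases hxm : x = m
        · subst x
          simp only [if_neg hxn, if_pos rfl]
          cases hn : e n with
          | none =>
            simp only [hn, h1.1, h1.2, Option.some.injEq]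
            constructor
            · rintro ⟨⟩
            · rintro ⟨-, -, -, h4, h | ⟨h, -⟩ | ⟨-, h⟩⟩
              · exact absurd h.symm h4
              · exact absurd h (Ne.symm hnm)
              · exact absurd h (by simp)
          | some u =>
            simp only [hn, h1.1, h1.2, Option.some.injEq]
            by_cases hu : u = n ∨ u = m
            · simp only [if_pos hu]
              constructor
              · rintro ⟨⟩
              · rintro ⟨-, -, h3, h4, h | ⟨h, -⟩ | ⟨-, h⟩⟩
                · exact absurd h.symm h4
                · exact absurd h (Ne.symm hnm)
                · rcases hu with rfl | rfl
                  · exact absurd h.symm h3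
                  · exact absurd h.symm h4
            · simp only [if_neg hu]
              push_neg at hu
              constructor
              · rintro ⟨rfl⟩
                exact ⟨h1.1, h1.2, hu.1, hu.2, Or.inr (Or.inr ⟨trivial, rfl⟩)⟩
              · rintro ⟨-, -, -, h4, h | ⟨h, -⟩ | ⟨-, h⟩⟩
                · exact absurd h.symm h4
                · exact absurd h (Ne.symm hnm)
                · exact congrArg some h
        · simp only [if_neg hxn, if_neg hxm, h1.1, h1.2, Option.some.injEq]
          constructor
          · rintro rfl
            exact ⟨h1.1, h1.2, hxn, hxm, Or.inl rfl⟩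
          · rintro ⟨-, -, -, -, h | ⟨h, -⟩ | ⟨h, -⟩⟩
            · exact h
            · exact absurd h hxn
            · exact absurd h hxm

lemma reconnect_self {e : V → Option V} {n m a : V} (h : a = n ∨ a = m) :
    reconnect e n m a = none := by
  unfold reconnect; rw [if_pos h]

lemma reconnect_none {e : V → Option V} {n m a : V} (h1 : a ≠ n) (h2 : a ≠ m)
    (h : e a = none) : reconnect e n m a = none := by
  unfold reconnect
  rw [if_neg (by tauto)]
  simp [h]

lemma chase_eq_of_big (G : PreGraph d V) (D : Finset V) (c : Fin (d + 1)) {f f' : ℕ}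
    (hf : D.card + 1 ≤ f) (hf' : D.card + 1 ≤ f') (a : V) :
    chase G D c f a = chase G D c f' a := by
  cases h : chase G D c f a with
  | none =>
    cases h' : chase G D c f' a with
    | none => rfl
    | some b =>
      have := chase_mono G D c hf (chase_bound G c f' D a b h')
      rw [h] at this; exact absurd this (by simp)
  | some b =>
    exact (chase_mono G D c hf' (chase_bound G c f D a b h)).symm

lemma chase_build_cross {G : PreGraph d V} {D : Finset V} {c : Fin (d + 1)} {f : ℕ}
    {a x y b : V} (hx : G.edge c a = some x) (hxD : x ∈ D) (hy : G.edge 0 x = some y)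
    (h : chase G D c f y = some b) : chase G D c (f + 1) a = some b := by
  rw [chase_succ]; simp only [hx, if_pos hxD, hy]; exact h

lemma chase_build_stop {G : PreGraph d V} {D : Finset V} {c : Fin (d + 1)} (f : ℕ)
    {a x : V} (hx : G.edge c a = some x) (hxD : x ∉ D) :
    chase G D c (f + 1) a = some x := by
  rw [chase_succ]; simp only [hx, if_neg hxD]

lemma chase_inv {G : PreGraph d V} {D : Finset V} {c : Fin (d + 1)} {f : ℕ} {a b : V}
    (h : chase G D c (f + 1) a = some b) :
    ∃ x, G.edge c a = some x ∧
      ((x ∉ D ∧ b = x) ∨ (x ∈ D ∧ ∃ y, G.edge 0 x = some y ∧ chase G D c f y = some b)) := by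
  rw [chase_succ] at h
  cases hx : G.edge c a with
  | none => simp [hx] at h
  | some x =>
    simp only [hx] at h
    refine ⟨x, rfl, ?_⟩
    by_cases hxD : x ∈ D
    · simp only [if_pos hxD] at h
      cases hy : G.edge 0 x with
      | none => simp [hy] at h
      | some y =>
        simp only [hy] at h
        exact Or.inr ⟨hxD, y, rfl, h⟩
    · simp only [if_neg hxD, Option.some.injEq] at h
      exact Or.inl ⟨hxD, h.symm⟩

section Contract

variable {G : PreGraph d V} {n m : V} {D' : Finset V}
variable (hsym : ∀ (c : Fin (d + 1)) (a b : V), G.edge c a = some b → G.edge c b = some a)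
variable (hfpf : ∀ (c : Fin (d + 1)) (a : V), G.edge c a ≠ some a)
variable (hline : G.edge 0 n = some m)
variable (hnD : n ∉ D') (hmD : m ∉ D')
variable (hD0 : ∀ w ∈ D', ∀ u, G.edge 0 w = some u → u ≠ n ∧ u ≠ m)

include hline hfpf in
lemma hnm_aux : n ≠ m := fun h => hfpf 0 n (by rw [hline, h])

include hsym hline in
lemma hmn_aux : G.edge 0 m = some n := hsym 0 n m hline

include hfpf hline hnD hmD hD0 in
lemma edge0_contract (x : V) (hx : x ∈ D') :
    (contractLine G n m).edge 0 x = G.edge 0 x := by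
  have hxn : x ≠ n := fun h => hnD (h ▸ hx)
  have hxm : x ≠ m := fun h => hmD (h ▸ hx)
  cases hu : G.edge 0 x with
  | none => exact reconnect_none hxn hxm hu
  | some u =>
    exact (reconnect_eq_some (hnm_aux hfpf hline)).mpr
      ⟨hxn, hxm, (hD0 x hx u hu).1, (hD0 x hx u hu).2, Or.inl hu⟩

include hsym hfpf hline hnD hmD hD0 in
lemma chase_contract_fwd (c : Fin (d + 1)) :
    ∀ f : ℕ, ∀ a b : V, chase G (insert n (insert m D')) c f a = some b →
      ((a = n ∨ a = m) → ∃ x', G.edge c a = some x' ∧ x' ≠ n ∧ x' ≠ m ∧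
          ((x' ∈ D' ∧ ∃ y, G.edge 0 x' = some y ∧
              ∃ g, chase (contractLine G n m) D' c g y = some b) ∨
           (x' ∉ D' ∧ b = x'))) ∧
      (a ≠ n → a ≠ m → ∃ g, chase (contractLine G n m) D' c g a = some b) := by
  have hnm : n ≠ m := hnm_aux hfpf hline
  have hmn : G.edge 0 m = some n := hmn_aux hsym hline
  intro f
  induction f with
  | zero => intro a b h; simp [chase] at h
  | succ f IH =>
    intro a b h
    obtain ⟨x, hx, hcase⟩ := chase_inv h
    by_cases hxn : x = n
    · rw [hxn] at hx hcase
      -- crossing the contracted line at n: continue from m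
      rcases hcase with ⟨hxD, -⟩ | ⟨-, y, hy, hch⟩
      · exact absurd (Finset.mem_insert_self n _) hxD
      · rw [hline] at hy
        obtain rfl : m = y := Option.some.inj hy
        have IHm := (IH m b hch).1 (Or.inr rfl)
        obtain ⟨x', hcm, hx'n, hx'm, hcont⟩ := IHm
        constructor
        · rintro (h' | h')
          · rw [h'] at hx; exact absurd hx (hfpf c n)
          · rw [h'] at hx; rw [hx] at hcm
            exact absurd (Option.some.inj hcm).symm hx'n
        · intro han ham
          have hrec : (contractLine G n m).edge c a = some x' :=
            (reconnect_eq_some hnm).mpr ⟨han, ham, hx'n, hx'm, Or.inr (Or.inl ⟨hx, hcm⟩)⟩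
          rcases hcont with ⟨hx'D, y', hy', g, hg⟩ | ⟨hx'D, rfl⟩
          · have he0 : (contractLine G n m).edge 0 x' = some y' := by
              rw [edge0_contract hfpf hline hnD hmD hD0 x' hx'D]; exact hy'
            exact ⟨g + 1, chase_build_cross hrec hx'D he0 hg⟩
          · exact ⟨1, chase_build_stop 0 hrec hx'D⟩
    · by_cases hxm : x = m
      · rw [hxm] at hx hcase
        rcases hcase with ⟨hxD, -⟩ | ⟨-, y, hy, hch⟩
        · exact absurd (Finset.mem_insert_of_mem (Finset.mem_insert_self m _)) hxD
        · rw [hmn] at hy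
          obtain rfl : n = y := Option.some.inj hy
          have IHn := (IH n b hch).1 (Or.inl rfl)
          obtain ⟨x', hcn, hx'n, hx'm, hcont⟩ := IHn
          constructor
          · rintro (h' | h')
            · rw [h'] at hx; rw [hx] at hcn
              exact absurd (Option.some.inj hcn).symm hx'm
            · rw [h'] at hx; exact absurd hx (hfpf c m)
          · intro han ham
            have hrec : (contractLine G n m).edge c a = some x' :=
              (reconnect_eq_some hnm).mpr ⟨han, ham, hx'n, hx'm, Or.inr (Or.inr ⟨hx, hcn⟩)⟩
            rcases hcont with ⟨hx'D, y', hy', g, hg⟩ | ⟨hx'D, rfl⟩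
            · have he0 : (contractLine G n m).edge 0 x' = some y' := by
                rw [edge0_contract hfpf hline hnD hmD hD0 x' hx'D]; exact hy'
              exact ⟨g + 1, chase_build_cross hrec hx'D he0 hg⟩
            · exact ⟨1, chase_build_stop 0 hrec hx'D⟩
      · by_cases hxD' : x ∈ D'
        · have hxD : x ∈ insert n (insert m D') :=
            Finset.mem_insert_of_mem (Finset.mem_insert_of_mem hxD')
          rcases hcase with ⟨hc, -⟩ | ⟨-, y, hy, hch⟩
          · exact absurd hxD hc
          · have hyn := hD0 x hxD' y hy
            have IHy := (IH y b hch).2 hyn.1 hyn.2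
            obtain ⟨g, hg⟩ := IHy
            constructor
            · intro _
              exact ⟨x, hx, hxn, hxm, Or.inl ⟨hxD', y, hy, g, hg⟩⟩
            · intro han ham
              have hrec : (contractLine G n m).edge c a = some x :=
                (reconnect_eq_some hnm).mpr ⟨han, ham, hxn, hxm, Or.inl hx⟩
              have he0 : (contractLine G n m).edge 0 x = some y := by
                rw [edge0_contract hfpf hline hnD hmD hD0 x hxD']; exact hy
              exact ⟨g + 1, chase_build_cross hrec hxD' he0 hg⟩
        · have hxD : x ∉ insert n (insert m D') := by
            simp [Finset.mem_insert, hxn, hxm, hxD']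
          rcases hcase with ⟨-, rfl⟩ | ⟨hc, -⟩
          · constructor
            · intro _
              exact ⟨b, hx, hxn, hxm, Or.inr ⟨hxD', rfl⟩⟩
            · intro han ham
              have hrec : (contractLine G n m).edge c a = some b :=
                (reconnect_eq_some hnm).mpr ⟨han, ham, hxn, hxm, Or.inl hx⟩
              exact ⟨1, chase_build_stop 0 hrec hxD'⟩
          · exact absurd hc hxD

include hsym hfpf hline hnD hmD hD0 in
lemma chase_contract_bwd (c : Fin (d + 1)) :
    ∀ f : ℕ, ∀ a b : V, a ≠ n → a ≠ m →
      chase (contractLine G n m) D' c f a = some b →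
      ∃ g, chase G (insert n (insert m D')) c g a = some b := by
  have hnm : n ≠ m := hnm_aux hfpf hline
  have hmn : G.edge 0 m = some n := hmn_aux hsym hline
  have hnD2 : n ∈ insert n (insert m D') := Finset.mem_insert_self n _
  have hmD2 : m ∈ insert n (insert m D') :=
    Finset.mem_insert_of_mem (Finset.mem_insert_self m _)
  intro f
  induction f with
  | zero => intro a b _ _ h; simp [chase] at h
  | succ f IH =>
    intro a b han ham h
    obtain ⟨X, hX, hcase⟩ := chase_inv h
    obtain ⟨-, -, hXn, hXm, hEcase⟩ := (reconnect_eq_some hnm).mp hX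
    rcases hcase with ⟨hXD, rfl⟩ | ⟨hXD, Y, hY, hch⟩
    · -- the chase in G' stops at X, which is outside all of D
      have hXDfull : b ∉ insert n (insert m D') := by
        simp [Finset.mem_insert, hXn, hXm, hXD]
      rcases hEcase with hE | ⟨hE1, hE2⟩ | ⟨hE1, hE2⟩
      · exact ⟨1, chase_build_stop 0 hE hXDfull⟩
      · exact ⟨2, chase_build_cross hE1 hnD2 hline (chase_build_stop 0 hE2 hXDfull)⟩
      · exact ⟨2, chase_build_cross hE1 hmD2 hmn (chase_build_stop 0 hE2 hXDfull)⟩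
    · -- the chase in G' crosses X ∈ D'
      have hYr : G.edge 0 X = some Y := by
        rw [← edge0_contract hfpf hline hnD hmD hD0 X hXD]; exact hY
      have hYn := hD0 X hXD Y hYr
      obtain ⟨g, hg⟩ := IH Y b hYn.1 hYn.2 hch
      have hXDfull : X ∈ insert n (insert m D') :=
        Finset.mem_insert_of_mem (Finset.mem_insert_of_mem hXD)
      rcases hEcase with hE | ⟨hE1, hE2⟩ | ⟨hE1, hE2⟩
      · exact ⟨g + 1, chase_build_cross hE hXDfull hYr hg⟩
      · exact ⟨g + 2, chase_build_cross hE1 hnD2 hline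
          (chase_build_cross hE2 hXDfull hYr hg)⟩
      · exact ⟨g + 2, chase_build_cross hE1 hmD2 hmn
          (chase_build_cross hE2 hXDfull hYr hg)⟩

include hsym hfpf hline hnD hmD hD0 in
lemma chase_contract_eq (c : Fin (d + 1)) (a : V) (han : a ≠ n) (ham : a ≠ m)
    {f f' : ℕ} (hf : D'.card + 1 ≤ f) (hf' : (insert n (insert m D')).card + 1 ≤ f') :
    chase (contractLine G n m) D' c f a = chase G (insert n (insert m D')) c f' a := by
  cases h : chase (contractLine G n m) D' c f a with
  | none =>
    cases h' : chase G (insert n (insert m D')) c f' a with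
    | none => rfl
    | some b =>
      obtain ⟨g, hg⟩ := ((chase_contract_fwd hsym hfpf hline hnD hmD hD0 c f' a b h').2
        han ham)
      have := chase_mono _ _ _ hf (chase_bound _ _ g D' a b hg)
      rw [h] at this
      exact absurd this (by simp)
  | some b =>
    obtain ⟨g, hg⟩ := chase_contract_bwd hsym hfpf hline hnD hmD hD0 c f a b han ham h
    exact (chase_mono _ _ _ hf' (chase_bound _ _ g _ a b hg)).symm

end Contract

lemma reconnect_symm {e : V → Option V} {n m : V} (hnm : n ≠ m)
    (hs : ∀ a b, e a = some b → e b = some a) :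
    ∀ a b, reconnect e n m a = some b → reconnect e n m b = some a := by
  intro a b h
  obtain ⟨han, ham, hbn, hbm, hc⟩ := (reconnect_eq_some hnm).mp h
  refine (reconnect_eq_some hnm).mpr ⟨hbn, hbm, han, ham, ?_⟩
  rcases hc with h1 | ⟨h1, h2⟩ | ⟨h1, h2⟩
  · exact Or.inl (hs a b h1)
  · exact Or.inr (Or.inr ⟨hs m b h2, hs a n h1⟩)
  · exact Or.inr (Or.inl ⟨hs n b h2, hs a m h1⟩)

lemma reconnect_fpf {e : V → Option V} {n m : V} (hnm : n ≠ m)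
    (hs : ∀ a b, e a = some b → e b = some a)
    (hf : ∀ a, e a ≠ some a) :
    ∀ a, reconnect e n m a ≠ some a := by
  intro a h
  obtain ⟨han, ham, -, -, hc⟩ := (reconnect_eq_some hnm).mp h
  rcases hc with h1 | ⟨h1, h2⟩ | ⟨h1, h2⟩
  · exact hf a h1
  · have := hs m a h2
    rw [h1] at this
    exact hnm (Option.some.inj this)
  · have := hs n a h2
    rw [h1] at this
    exact hnm (Option.some.inj this).symm

lemma endpoints_insert (p : V × V) (T : Finset (V × V)) :
    endpoints (insert p T) = insert p.1 (insert p.2 (endpoints T)) := by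
  ext w
  simp only [endpoints, Finset.mem_union, Finset.mem_image, Finset.mem_insert]
  constructor
  · rintro (⟨q, hq | hq, rfl⟩ | ⟨q, hq | hq, rfl⟩)
    · exact Or.inl (by rw [hq])
    · exact Or.inr (Or.inr (Or.inl ⟨q, hq, rfl⟩))
    · exact Or.inr (Or.inl (by rw [hq]))
    · exact Or.inr (Or.inr (Or.inr ⟨q, hq, rfl⟩))
  · rintro (rfl | rfl | ⟨q, hq, rfl⟩ | ⟨q, hq, rfl⟩)
    · exact Or.inl ⟨p, Or.inl rfl, rfl⟩
    · exact Or.inr ⟨p, Or.inl rfl, rfl⟩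
    · exact Or.inl ⟨q, Or.inr hq, rfl⟩
    · exact Or.inr ⟨q, Or.inr hq, rfl⟩

lemma mem_endpoints {w : V} {T : Finset (V × V)} :
    w ∈ endpoints T ↔ ∃ q ∈ T, w = q.1 ∨ w = q.2 := by
  simp only [endpoints, Finset.mem_union, Finset.mem_image]
  constructor
  · rintro (⟨q, hq, rfl⟩ | ⟨q, hq, rfl⟩)
    · exact ⟨q, hq, Or.inl rfl⟩
    · exact ⟨q, hq, Or.inr rfl⟩
  · rintro ⟨q, hq, rfl | rfl⟩
    · exact Or.inl ⟨q, hq, rfl⟩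
    · exact Or.inr ⟨q, hq, rfl⟩

lemma card_endpoints_le (T : Finset (V × V)) : (endpoints T).card ≤ 2 * T.card := by
  unfold endpoints
  calc (T.image Prod.fst ∪ T.image Prod.snd).card
      ≤ (T.image Prod.fst).card + (T.image Prod.snd).card := Finset.card_union_le _ _
    _ ≤ T.card + T.card := Nat.add_le_add (Finset.card_image_le) (Finset.card_image_le)
    _ = 2 * T.card := by omega

lemma contractList_eq_global :
    ∀ (l : List (V × V)) (G : PreGraph d V),
      (∀ (c : Fin (d + 1)) (a b : V), G.edge c a = some b → G.edge c b = some a) →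
      (∀ (c : Fin (d + 1)) (a : V), G.edge c a ≠ some a) →
      (∀ p ∈ l, isLine G p) → l.Nodup →
      l.Pairwise (fun p q => p.1 ≠ q.1 ∧ p.1 ≠ q.2 ∧ p.2 ≠ q.1 ∧ p.2 ≠ q.2) →
      contractList G l = globalContract G l.toFinset := by
  intro l
  induction l with
  | nil =>
    intro G hsym hfpf _ _ _
    show G = globalContract G [].toFinset
    rw [List.toFinset_nil]
    have he : endpoints (∅ : Finset (V × V)) = ∅ := by
      ext w; simp [endpoints]
    cases G with
    | mk verts edge =>
      unfold globalContract
      rw [PreGraph.mk.injEq]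
      constructor
      · rw [he, Finset.sdiff_empty]
      · funext c a
        rw [he]
        simp only [Finset.notMem_empty, if_false, Finset.card_empty]
        show edge c a = chase ⟨verts, edge⟩ ∅ c (1 + 1) a
        rw [chase_succ]
        cases hx : edge c a with
        | none => simp [hx]
        | some x => simp [hx]
  | cons p r IHr =>
    intro G hsym hfpf hlines hnodup hpair
    obtain ⟨n, m⟩ := p
    have hline : G.edge 0 n = some m := hlines (n, m) List.mem_cons_self
    have hnm : n ≠ m := fun h => hfpf 0 n (by rw [hline, h])
    have hpair_head : ∀ q ∈ r, n ≠ q.1 ∧ n ≠ q.2 ∧ m ≠ q.1 ∧ m ≠ q.2 :=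
      (List.pairwise_cons.mp hpair).1
    have hsym' : ∀ (c : Fin (d + 1)) (a b : V),
        (contractLine G n m).edge c a = some b → (contractLine G n m).edge c b = some a :=
      fun c => reconnect_symm hnm (hsym c)
    have hfpf' : ∀ (c : Fin (d + 1)) (a : V), (contractLine G n m).edge c a ≠ some a :=
      fun c => reconnect_fpf hnm (hsym c) (hfpf c)
    have hlines' : ∀ q ∈ r, isLine (contractLine G n m) q := by
      intro q hq
      have h0 : G.edge 0 q.1 = some q.2 := hlines q (List.mem_cons_of_mem _ hq)
      have hd := hpair_head q hq
      exact (reconnect_eq_some hnm).mpr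
        ⟨hd.1.symm, hd.2.2.1.symm, hd.2.1.symm, hd.2.2.2.symm, Or.inl h0⟩
    have IH := IHr (contractLine G n m) hsym' hfpf' hlines'
      (List.nodup_cons.mp hnodup).2 (List.pairwise_cons.mp hpair).2
    show contractList (contractLine G n m) r = globalContract G ((n, m) :: r).toFinset
    rw [IH, List.toFinset_cons]
    -- now prove the globalContract identity
    set T := r.toFinset with hT
    have hpT : (n, m) ∉ T := by
      rw [hT, List.mem_toFinset]
      exact (List.nodup_cons.mp hnodup).1
    have hcardS : (insert (n, m) T).card = T.card + 1 := Finset.card_insert_of_notMem hpT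
    have hmemT : ∀ q ∈ T, q ∈ r := fun q hq => List.mem_toFinset.mp hq
    have hend : endpoints (insert (n, m) T) = insert n (insert m (endpoints T)) :=
      endpoints_insert (n, m) T
    have hnD' : n ∉ endpoints T := by
      rw [mem_endpoints]
      rintro ⟨q, hq, h | h⟩
      · exact (hpair_head q (hmemT q hq)).1 h
      · exact (hpair_head q (hmemT q hq)).2.1 h
    have hmD' : m ∉ endpoints T := by
      rw [mem_endpoints]
      rintro ⟨q, hq, h | h⟩
      · exact (hpair_head q (hmemT q hq)).2.2.1 h
      · exact (hpair_head q (hmemT q hq)).2.2.2 h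
    have hD0 : ∀ w ∈ endpoints T, ∀ u, G.edge 0 w = some u → u ≠ n ∧ u ≠ m := by
      intro w hw u hu
      obtain ⟨q, hq, hw1 | hw2⟩ := mem_endpoints.mp hw
      · have h0 : G.edge 0 q.1 = some q.2 := hlines q (List.mem_cons_of_mem _ (hmemT q hq))
        rw [hw1, h0] at hu
        obtain rfl : q.2 = u := Option.some.inj hu
        exact ⟨(hpair_head q (hmemT q hq)).2.1.symm, (hpair_head q (hmemT q hq)).2.2.2.symm⟩
      · have h0 : G.edge 0 q.2 = some q.1 :=
          hsym 0 q.1 q.2 (hlines q (List.mem_cons_of_mem _ (hmemT q hq)))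
        rw [hw2, h0] at hu
        obtain rfl : q.1 = u := Option.some.inj hu
        exact ⟨(hpair_head q (hmemT q hq)).1.symm, (hpair_head q (hmemT q hq)).2.2.1.symm⟩
    have hcard1 : (endpoints T).card ≤ 2 * T.card := card_endpoints_le T
    have hcard2 : (insert n (insert m (endpoints T))).card ≤ (endpoints T).card + 2 := by
      calc (insert n (insert m (endpoints T))).card
          ≤ (insert m (endpoints T)).card + 1 := Finset.card_insert_le _ _
        _ ≤ (endpoints T).card + 1 + 1 := Nat.add_le_add_right (Finset.card_insert_le _ _) 1
        _ = (endpoints T).card + 2 := by omega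
    unfold globalContract
    rw [PreGraph.mk.injEq]
    constructor
    · show (G.verts \ {n, m}) \ endpoints T = _
      rw [hend]
      ext w
      simp only [Finset.mem_sdiff, Finset.mem_insert, Finset.mem_singleton,
        Finset.notMem_singleton]
      tauto
    · funext c a
      by_cases haD : a ∈ endpoints T
      · rw [if_pos haD, if_pos (by
          rw [hend]
          exact Finset.mem_insert_of_mem (Finset.mem_insert_of_mem haD))]
      · rw [if_neg haD]
        by_cases han : a = n
        · rw [if_pos (by rw [hend, han]; exact Finset.mem_insert_self n _)]
          rw [show 2 * T.card + 2 = (2 * T.card + 1) + 1 by omega, chase_succ]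
          have : (contractLine G n m).edge c a = none := reconnect_self (Or.inl han)
          rw [this]
        · by_cases ham : a = m
          · rw [if_pos (by
              rw [hend, ham]
              exact Finset.mem_insert_of_mem (Finset.mem_insert_self m _))]
            rw [show 2 * T.card + 2 = (2 * T.card + 1) + 1 by omega, chase_succ]
            have : (contractLine G n m).edge c a = none := reconnect_self (Or.inr ham)
            rw [this]
          · rw [if_neg (by
              rw [hend]
              simp only [Finset.mem_insert]
              tauto)]
            rw [hend]
            exact chase_contract_eq hsym hfpf hline hnD' hmD' hD0 c a han ham
              (by omega) (by rw [hcardS]; omega)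

end Aux

/-- **Contraction of a subgraph is well defined and admits a global characterization**:
successively contracting the lines of a subgraph `H` (in any order) yields the same
graph `G/H`, and `G/H` is obtained by deleting all faces of `G` internal to `H` and
replacing every external face of the colored extension `H_c` by a single line of the
corresponding color. -/
theorem subgraph_contraction_well_defined {d : ℕ} {V : Type} [DecidableEq V]
    (G : PreGraph d V) (hG : isColored G)
    (l₁ l₂ : List (V × V)) (hperm : l₁.Perm l₂)
    (hlines : ∀ p ∈ l₁, isLine G p)
    (hnodup : l₁.Nodup)
    (hdisj : l₁.Pairwise fun p q => p.1 ≠ q.1 ∧ p.1 ≠ q.2 ∧ p.2 ≠ q.1 ∧ p.2 ≠ q.2) :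
    contractList G l₁ = contractList G l₂ ∧
      contractList G l₁ = globalContract G l₁.toFinset := by
  have hsym := hG.1
  have hfpf := hG.2.2.1
  have eq1 : contractList G l₁ = globalContract G l₁.toFinset :=
    contractList_eq_global l₁ G hsym hfpf hlines hnodup hdisj
  have hlines₂ : ∀ p ∈ l₂, isLine G p := fun p hp => hlines p (hperm.mem_iff.mpr hp)
  have hnodup₂ : l₂.Nodup := hnodup.perm hperm
  have hdisj₂ : l₂.Pairwise fun p q => p.1 ≠ q.1 ∧ p.1 ≠ q.2 ∧ p.2 ≠ q.1 ∧ p.2 ≠ q.2 := by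
    refine (List.Perm.pairwise_iff ?_ hperm).mp hdisj
    rintro p q ⟨h1, h2, h3, h4⟩
    exact ⟨h1.symm, h3.symm, h2.symm, h4.symm⟩
  have eq2 : contractList G l₂ = globalContract G l₂.toFinset :=
    contractList_eq_global l₂ G hsym hfpf hlines₂ hnodup₂ hdisj₂
  have htf : l₁.toFinset = l₂.toFinset := by
    ext w
    rw [List.mem_toFinset, List.mem_toFinset]
    exact hperm.mem_iff
  refine ⟨?_, eq1⟩
  rw [eq1, eq2, htf]
end

section
/- If G is a connected TGFT graph (connected in the sense that its line-face incidence matrix does not factorize into blocks) and e is a line of G contained in a d-dipole, then the contracted graph G/e is connected. -/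
variable {d : ℕ} {V : Type}

namespace TG
variable {d : ℕ} {V : Type}


theorem iter_zero (G : PreGraph d V) (c : Fin (d+1)) (a : V) : iterStep G c 0 a = some a := rfl

theorem iter_succ (G : PreGraph d V) (c : Fin (d+1)) (k : ℕ) (a : V) :
    iterStep G c (k+1) a = (faceStep G c a).bind (iterStep G c k) := rfl

theorem iter_add (G : PreGraph d V) (c : Fin (d+1)) (j k : ℕ) (a : V) :
    iterStep G c (j + k) a = (iterStep G c j a).bind (iterStep G c k) := by
  induction j generalizing a with
  | zero => simp [iter_zero]
  | succ j ih =>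
    have : j + 1 + k = (j + k) + 1 := by omega
    rw [this]
    rw [iter_succ, iter_succ]
    cases h : faceStep G c a with
    | none => simp
    | some b => simp [ih b]

theorem iter_succ' (G : PreGraph d V) (c : Fin (d+1)) (k : ℕ) (a : V) :
    iterStep G c (k+1) a = (iterStep G c k a).bind (faceStep G c) := by
  have : k + 1 = k + 1 := rfl
  rw [show k + 1 = k + 1 from rfl, show (k+1) = k + 1 from rfl]
  have := iter_add G c k 1 a
  rw [this]
  cases h : iterStep G c k a with
  | none => simp
  | some b =>
    simp only [Option.bind_some, iter_succ, iter_zero]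
    cases faceStep G c b <;> simp [iter_zero]

theorem iter_mul (G : PreGraph d V) (c : Fin (d+1)) {k : ℕ} {a : V}
    (h : iterStep G c k a = some a) (t : ℕ) : iterStep G c (t * k) a = some a := by
  induction t with
  | zero => simp [iter_zero]
  | succ t ih => rw [show (t+1)*k = t*k + k by ring, iter_add, ih]; simpa using h

theorem iter_mod (G : PreGraph d V) (c : Fin (d+1)) {k : ℕ} {a : V}
    (h : iterStep G c k a = some a) (t : ℕ) :
    iterStep G c t a = iterStep G c (t % k) a := by
  conv_lhs => rw [show t = (t/k)*k + t%k from by rw [Nat.mul_comm]; exact (Nat.div_add_mod t k).symm]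
  rw [iter_add, iter_mul G c h, Option.bind_some]


def Visits (G : PreGraph d V) (c : Fin (d+1)) (a b : V) : Prop :=
  ∃ j, iterStep G c j a = some b

def CrossAt (G : PreGraph d V) (c : Fin (d+1)) (b : V) (p : V × V) : Prop :=
  ∃ xy, crossedPair G c b = some xy ∧ pairMatch xy p

def Dip (n m : V) (p : V × V) : Prop := p = (n, m) ∨ p = (m, n)

theorem visits_refl (G : PreGraph d V) (c : Fin (d+1)) (a : V) : Visits G c a a :=
  ⟨0, rfl⟩

theorem visits_trans {G : PreGraph d V} {c : Fin (d+1)} {a b e : V}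
    (h1 : Visits G c a b) (h2 : Visits G c b e) : Visits G c a e := by
  obtain ⟨j1, h1⟩ := h1; obtain ⟨j2, h2⟩ := h2
  exact ⟨j1 + j2, by rw [iter_add, h1, Option.bind_some, h2]⟩

theorem periodic_of_visits {G : PreGraph d V} {c : Fin (d+1)} {k : ℕ} {a b : V}
    (hper : iterStep G c k a = some a) (hv : Visits G c a b) :
    iterStep G c k b = some b := by
  obtain ⟨j, hj⟩ := hv
  have h1 : iterStep G c (j + k) a = iterStep G c k b := by
    rw [iter_add, hj, Option.bind_some]
  have h2 : iterStep G c (k + j) a = some b := by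
    rw [iter_add, hper, Option.bind_some, hj]
  rw [← h1, Nat.add_comm]; exact h2

theorem visits_invert {G : PreGraph d V} {c : Fin (d+1)}
    (hinj : ∀ x y u, faceStep G c x = some u → faceStep G c y = some u → x = y)
    {k : ℕ} (hk : 0 < k) :
    ∀ {t : ℕ} {w u : V}, iterStep G c t w = some u → iterStep G c k u = some u →
      Visits G c u w := by
  intro t
  induction t with
  | zero => intro w u h hu; cases h; exact visits_refl G c w
  | succ t ih =>
    intro w u h hu
    rw [iter_succ] at h
    obtain ⟨r, hr, hru⟩ := Option.bind_eq_some_iff.mp h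
    have hvur : Visits G c u r := ih hru hu
    have hrper : iterStep G c k r = some r := periodic_of_visits hu hvur
    obtain ⟨k', rfl⟩ : ∃ k', k = k' + 1 := ⟨k - 1, by omega⟩
    rw [iter_succ'] at hrper
    obtain ⟨w', hw', hw'r⟩ := Option.bind_eq_some_iff.mp hrper
    have : w' = w := hinj w' w r hw'r hr
    subst this
    obtain ⟨s, hs⟩ := hvur
    exact ⟨s + k', by rw [iter_add, hs, Option.bind_some, hw']⟩

theorem crossedPair_eq_some {G : PreGraph d V} {c : Fin (d+1)} {b x y : V} :
    crossedPair G c b = some (x, y) ↔ G.edge c b = some x ∧ G.edge 0 x = some y := by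
  constructor
  · intro hcp
    unfold crossedPair at hcp
    cases h : G.edge c b with
    | none => rw [h] at hcp; cases hcp
    | some x' =>
      rw [h] at hcp
      have hcp2 : (match G.edge 0 x' with
          | none => (none : Option (V × V))
          | some y => some (x', y)) = some (x, y) := hcp
      cases h0 : G.edge 0 x' with
      | none => rw [h0] at hcp2; cases hcp2
      | some y' =>
        rw [h0] at hcp2
        simp only [Option.some.injEq, Prod.mk.injEq] at hcp2
        obtain ⟨rfl, rfl⟩ := hcp2
        exact ⟨rfl, h0⟩
  · rintro ⟨h, h0⟩
    unfold crossedPair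
    rw [h]
    show (match G.edge 0 x with
        | none => (none : Option (V × V))
        | some y => some (x, y)) = some (x, y)
    rw [h0]

theorem pairMatch_swap {x y : V} {p : V × V} (h : pairMatch (x, y) p) :
    pairMatch (y, x) p := by
  rcases h with h | h
  · right; rw [← h]
  · left; have : x = p.2 ∧ y = p.1 := by constructor <;> [exact congrArg Prod.fst h; exact congrArg Prod.snd h]
    rw [this.1, this.2]

theorem faceCrosses_iff {G : PreGraph d V} {c : Fin (d+1)} {a : V} {k : ℕ}
    (hcf : ClosedFace G c a k) (p : V × V) :
    FaceCrosses G c a k p ↔ ∃ b, Visits G c a b ∧ CrossAt G c b p := by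
  constructor
  · rintro ⟨j, _, b, hb, hx⟩; exact ⟨b, ⟨j, hb⟩, hx⟩
  · rintro ⟨b, ⟨j, hj⟩, hx⟩
    refine ⟨j % k, Nat.mod_lt _ hcf.1, b, ?_, hx⟩
    rw [← iter_mod G c hcf.2]; exact hj

theorem visits_rebase {G : PreGraph d V} {c : Fin (d+1)}
    (hinj : ∀ x y u, faceStep G c x = some u → faceStep G c y = some u → x = y)
    {k : ℕ} {a b v : V} (hcf : ClosedFace G c a k)
    (hb : Visits G c a b) (hv : Visits G c a v) : Visits G c b v := by
  obtain ⟨j, hj⟩ := hb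
  have hbper := periodic_of_visits hcf.2 ⟨j, hj⟩
  exact visits_trans (visits_invert hinj hcf.1 hj hbper) hv

section Recon
variable [DecidableEq V]

def relink (e : V → Option V) (n m : V) (z : V) : Option V :=
  (e z).bind (fun b => if b = n ∨ b = m then none else some b)

theorem reconnect_def (e : V → Option V) (n m a : V) :
    reconnect e n m a =
      if a = n ∨ a = m then none
      else (e a).bind (fun x =>
        if x = n then relink e n m m else if x = m then relink e n m n else some x) := by
  unfold reconnect relink
  by_cases h : a = n ∨ a = m
  · rw [if_pos h, if_pos h]
  · rw [if_neg h, if_neg h]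
    cases e a with
    | none => rfl
    | some x =>
      simp only [Option.bind_some]
      by_cases hx : x = n
      · rw [if_pos hx, if_pos hx]
        cases e m with
        | none => rfl
        | some b => rfl
      · rw [if_neg hx, if_neg hx]
        by_cases hx2 : x = m
        · rw [if_pos hx2, if_pos hx2]
          cases e n with
          | none => rfl
          | some b => rfl
        · rw [if_neg hx2, if_neg hx2]

theorem relink_ne {e : V → Option V} {n m z b : V} (h : relink e n m z = some b) :
    b ≠ n ∧ b ≠ m := by
  unfold relink at h
  obtain ⟨b', hb', h⟩ := Option.bind_eq_some_iff.mp h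
  by_cases hg : b' = n ∨ b' = m
  · rw [if_pos hg] at h; cases h
  · rw [if_neg hg] at h
    cases h
    push_neg at hg
    exact hg

theorem reconnect_ne {e : V → Option V} {n m a b : V} (h : reconnect e n m a = some b) :
    a ≠ n ∧ a ≠ m ∧ b ≠ n ∧ b ≠ m := by
  rw [reconnect_def] at h
  by_cases ha : a = n ∨ a = m
  · rw [if_pos ha] at h; cases h
  · rw [if_neg ha] at h
    push_neg at ha
    refine ⟨ha.1, ha.2, ?_⟩
    obtain ⟨x, hx, h⟩ := Option.bind_eq_some_iff.mp h
    by_cases h1 : x = n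
    · rw [if_pos h1] at h; exact relink_ne h
    · rw [if_neg h1] at h
      by_cases h2 : x = m
      · rw [if_pos h2] at h; exact relink_ne h
      · rw [if_neg h2] at h; cases h; exact ⟨h1, h2⟩

end Recon

section Struct
variable {G : PreGraph d V} {n m : V}

theorem edge_inj (hG : isColored G) {c : Fin (d+1)} {x y u : V}
    (hx : G.edge c x = some u) (hy : G.edge c y = some u) : x = y := by
  have h1 := hG.1 c x u hx
  have h2 := hG.1 c y u hy
  rw [h1] at h2; exact (Option.some.injEq _ _ ▸ h2 : x = y).symm ▸ rfl

theorem step_inj (hG : isColored G) {c : Fin (d+1)} {x y u : V}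
    (hx : faceStep G c x = some u) (hy : faceStep G c y = some u) : x = y := by
  obtain ⟨a, ha, ha'⟩ := Option.bind_eq_some_iff.mp hx
  obtain ⟨b, hb, hb'⟩ := Option.bind_eq_some_iff.mp hy
  have : a = b := edge_inj hG ha' hb'
  subst this
  exact edge_inj hG ha hb

theorem sym0 (hG : isColored G) (hline : G.edge 0 n = some m) : G.edge 0 m = some n :=
  hG.1 0 n m hline

theorem nm_ne (hG : isColored G) (hline : G.edge 0 n = some m) : n ≠ m := by
  intro h; subst h; exact hG.2.2.1 0 n hline

end Struct

section Sim
variable [DecidableEq V] {G : PreGraph d V} {n m : V}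

/-- The color-0 reconnection acts as identity away from `n, m`. -/
theorem reconnect_e0 (hG : isColored G) (hline : G.edge 0 n = some m)
    {x : V} (hx1 : x ≠ n) (hx2 : x ≠ m) :
    reconnect (G.edge 0) n m x = G.edge 0 x := by
  rw [reconnect_def, if_neg (by tauto)]
  cases h0 : G.edge 0 x with
  | none => rfl
  | some z =>
    have hz1 : z ≠ n := by
      intro h
      have h2 : G.edge 0 n = some x := hG.1 0 x n (h ▸ h0)
      rw [hline] at h2
      exact hx2 (Option.some.inj h2).symm
    have hz2 : z ≠ m := by
      intro h
      have h2 : G.edge 0 m = some x := hG.1 0 x m (h ▸ h0)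
      rw [sym0 hG hline] at h2
      exact hx1 (Option.some.inj h2).symm
    simp only [Option.bind_some, if_neg hz1, if_neg hz2]

theorem step_sim (hG : isColored G) (hline : G.edge 0 n = some m) {c : Fin (d+1)}
    {a : V} (ha1 : a ≠ n) (ha2 : a ≠ m) :
    faceStep (contractLine G n m) c a =
      (faceStep G c a).bind
        (fun b => if b = n ∨ b = m then faceStep G c b else some b) := by
  show (reconnect (G.edge c) n m a).bind (reconnect (G.edge 0) n m) = _
  rw [reconnect_def, if_neg (by tauto)]
  cases hea : G.edge c a with
  | none =>
    have : faceStep G c a = none := by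
      rw [show faceStep G c a = (G.edge c a).bind (G.edge 0) from rfl, hea]; rfl
    rw [this]; rfl
  | some x =>
    have hrhs : faceStep G c a = G.edge 0 x := by
      rw [show faceStep G c a = (G.edge c a).bind (G.edge 0) from rfl, hea]; rfl
    simp only [Option.bind_some]
    by_cases hx1 : x = n
    · rw [if_pos hx1]
      have he0x : G.edge 0 x = some m := by rw [hx1]; exact hline
      rw [hrhs, he0x, Option.bind_some, if_pos (Or.inr rfl)]
      unfold relink
      cases hem : G.edge c m with
      | none =>
        show (none : Option V) = faceStep G c m
        rw [show faceStep G c m = (G.edge c m).bind (G.edge 0) from rfl, hem]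
        rfl
      | some b' =>
        have hb'm : b' ≠ m := fun h => hG.2.2.1 c m (h ▸ hem)
        have hb'n : b' ≠ n := by
          intro h
          have h1 : G.edge c n = some a := hG.1 c a n (hx1 ▸ hea)
          have h2 : G.edge c n = some m := hG.1 c m n (h ▸ hem)
          rw [h1] at h2
          exact ha2 (Option.some.inj h2)
        simp only [Option.bind_some, if_neg (show ¬(b' = n ∨ b' = m) by tauto)]
        rw [reconnect_e0 hG hline hb'n hb'm,
          show faceStep G c m = (G.edge c m).bind (G.edge 0) from rfl, hem, Option.bind_some]
    · by_cases hx2 : x = m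
      · rw [if_neg hx1, if_pos hx2]
        have he0x : G.edge 0 x = some n := by rw [hx2]; exact sym0 hG hline
        rw [hrhs, he0x, Option.bind_some, if_pos (Or.inl rfl)]
        unfold relink
        cases hen : G.edge c n with
        | none =>
          show (none : Option V) = faceStep G c n
          rw [show faceStep G c n = (G.edge c n).bind (G.edge 0) from rfl, hen]
          rfl
        | some b'' =>
          have hbn : b'' ≠ n := fun h => hG.2.2.1 c n (h ▸ hen)
          have hbm : b'' ≠ m := by
            intro h
            have h1 : G.edge c m = some a := hG.1 c a m (hx2 ▸ hea)
            have h2 : G.edge c m = some n := hG.1 c n m (h ▸ hen)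
            rw [h1] at h2
            exact ha1 (Option.some.inj h2)
          simp only [Option.bind_some, if_neg (show ¬(b'' = n ∨ b'' = m) by tauto)]
          rw [reconnect_e0 hG hline hbn hbm,
            show faceStep G c n = (G.edge c n).bind (G.edge 0) from rfl, hen, Option.bind_some]
      · rw [if_neg hx1, if_neg hx2, hrhs, Option.bind_some, reconnect_e0 hG hline hx1 hx2]
        cases h0 : G.edge 0 x with
        | none => rfl
        | some z =>
          have hz1 : z ≠ n := by
            intro h
            have h2 : G.edge 0 n = some x := hG.1 0 x n (h ▸ h0)
            rw [hline] at h2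
            exact hx2 (Option.some.inj h2).symm
          have hz2 : z ≠ m := by
            intro h
            have h2 : G.edge 0 m = some x := hG.1 0 x m (h ▸ h0)
            rw [sym0 hG hline] at h2
            exact hx1 (Option.some.inj h2).symm
          simp only [Option.bind_some, if_neg (show ¬(z = n ∨ z = m) by tauto)]

end Sim

section Unshared
variable [DecidableEq V] {G : PreGraph d V} {n m : V} {c : Fin (d+1)}

omit [DecidableEq V] in
theorem pairMatch_dip {n m : V} {p : V × V} (h : pairMatch (n, m) p ∨ pairMatch (m, n) p) :
    Dip n m p := by
  rcases h with (h | h) | (h | h)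
  · exact Or.inl h.symm
  · right; have h1 : p.2 = n := (congrArg Prod.fst h).symm
    have h2 : p.1 = m := (congrArg Prod.snd h).symm
    rw [show p = (p.1, p.2) from rfl, h1, h2]
  · exact Or.inr h.symm
  · left; have h1 : p.2 = m := (congrArg Prod.fst h).symm
    have h2 : p.1 = n := (congrArg Prod.snd h).symm
    rw [show p = (p.1, p.2) from rfl, h1, h2]

omit [DecidableEq V] in
theorem avoid_n (hG : isColored G) (hline : G.edge 0 n = some m)
    (hcns : G.edge c n ≠ some m) {w : V} (hw : faceStep G c n = some w) :
    w ≠ n ∧ w ≠ m := by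
  obtain ⟨x, hx, hx0⟩ := Option.bind_eq_some_iff.mp hw
  have hxn : x ≠ n := fun h => hG.2.2.1 c n (h ▸ hx)
  have hxm : x ≠ m := fun h => hcns (h ▸ hx)
  constructor
  · intro h
    have h2 : G.edge 0 n = some x := hG.1 0 x n (h ▸ hx0)
    rw [hline] at h2
    exact hxm (Option.some.inj h2).symm
  · intro h
    have h2 : G.edge 0 m = some x := hG.1 0 x m (h ▸ hx0)
    rw [sym0 hG hline] at h2
    exact hxn (Option.some.inj h2).symm

omit [DecidableEq V] in
theorem avoid_m (hG : isColored G) (hline : G.edge 0 n = some m)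
    (hcns : G.edge c n ≠ some m) {w : V} (hw : faceStep G c m = some w) :
    w ≠ n ∧ w ≠ m := by
  obtain ⟨x, hx, hx0⟩ := Option.bind_eq_some_iff.mp hw
  have hxm : x ≠ m := fun h => hG.2.2.1 c m (h ▸ hx)
  have hxn : x ≠ n := fun h => hcns (hG.1 c m n (h ▸ hx))
  constructor
  · intro h
    have h2 : G.edge 0 n = some x := hG.1 0 x n (h ▸ hx0)
    rw [hline] at h2
    exact hxm (Option.some.inj h2).symm
  · intro h
    have h2 : G.edge 0 m = some x := hG.1 0 x m (h ▸ hx0)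
    rw [sym0 hG hline] at h2
    exact hxn (Option.some.inj h2).symm

omit [DecidableEq V] in
theorem avoid_nm (hG : isColored G) (hline : G.edge 0 n = some m)
    (hcns : G.edge c n ≠ some m) :
    ∀ b w, (b = n ∨ b = m) → faceStep G c b = some w → w ≠ n ∧ w ≠ m := by
  intro b w hb hw
  rcases hb with hb | hb
  · exact avoid_n hG hline hcns (hb ▸ hw)
  · exact avoid_m hG hline hcns (hb ▸ hw)

theorem cover (hG : isColored G) (hline : G.edge 0 n = some m)
    (hcns : G.edge c n ≠ some m) {a : V} (ha1 : a ≠ n) (ha2 : a ≠ m) :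
    ∀ j b, iterStep G c j a = some b → b ≠ n → b ≠ m →
      ∃ j', (0 < j → 0 < j') ∧ iterStep (contractLine G n m) c j' a = some b := by
  intro j
  induction j using Nat.strong_induction_on with
  | _ j ih =>
    match j with
    | 0 =>
      intro b hb _ _
      exact ⟨0, by simp, hb⟩
    | (j + 1) =>
      intro b hb hbn hbm
      rw [iter_succ'] at hb
      obtain ⟨r, hr, hrb⟩ := Option.bind_eq_some_iff.mp hb
      by_cases hrnm : r = n ∨ r = m
      · match j, hr with
        | 0, hr =>
          cases hr
          exact absurd hrnm (by tauto)
        | (j0 + 1), hr =>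
          rw [iter_succ'] at hr
          obtain ⟨r2, hr2, hr2r⟩ := Option.bind_eq_some_iff.mp hr
          have hr2nm : r2 ≠ n ∧ r2 ≠ m := by
            by_contra hcon
            push_neg at hcon
            by_cases h2 : r2 = n ∨ r2 = m
            · exact absurd hrnm (by
                have := avoid_nm hG hline hcns r2 r h2 hr2r
                tauto)
            · exact h2 (by tauto)
          obtain ⟨j', _, hj'⟩ := ih j0 (by omega) r2 hr2 hr2nm.1 hr2nm.2
          refine ⟨j' + 1, fun _ => by omega, ?_⟩
          rw [iter_succ', hj', Option.bind_some,
            step_sim hG hline hr2nm.1 hr2nm.2, hr2r, Option.bind_some, if_pos hrnm, hrb]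
      · push_neg at hrnm
        obtain ⟨j', _, hj'⟩ := ih j (by omega) r hr hrnm.1 hrnm.2
        refine ⟨j' + 1, fun _ => by omega, ?_⟩
        rw [iter_succ', hj', Option.bind_some,
          step_sim hG hline hrnm.1 hrnm.2, hrb, Option.bind_some,
          if_neg (show ¬(b = n ∨ b = m) by tauto)]

theorem cross_G_to_D (hG : isColored G) (hline : G.edge 0 n = some m)
    {b x y : V} (hb1 : b ≠ n) (hb2 : b ≠ m) (hx1 : x ≠ n) (hx2 : x ≠ m)
    (h : crossedPair G c b = some (x, y)) :
    crossedPair (contractLine G n m) c b = some (x, y) := by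
  obtain ⟨he, he0⟩ := crossedPair_eq_some.mp h
  apply crossedPair_eq_some.mpr
  constructor
  · show reconnect (G.edge c) n m b = some x
    rw [reconnect_def, if_neg (by tauto), he, Option.bind_some, if_neg hx1, if_neg hx2]
  · show reconnect (G.edge 0) n m x = some y
    rw [reconnect_e0 hG hline hx1 hx2]; exact he0

theorem cross_at_n (hG : isColored G) (hline : G.edge 0 n = some m)
    {n' m' : V} (hn' : G.edge c n = some n') (hm' : G.edge c m = some m')
    (hn'1 : n' ≠ n) (hn'2 : n' ≠ m) (hm'1 : m' ≠ n) (hm'2 : m' ≠ m)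
    {xy : V × V} (h : crossedPair G c n = some xy) :
    crossedPair (contractLine G n m) c m' = some xy := by
  obtain ⟨x, y⟩ := xy
  obtain ⟨he, he0⟩ := crossedPair_eq_some.mp h
  have hx : x = n' := by rw [hn'] at he; exact (Option.some.inj he).symm
  rw [hx] at he0 ⊢
  apply crossedPair_eq_some.mpr
  constructor
  · show reconnect (G.edge c) n m m' = some n'
    rw [reconnect_def, if_neg (by tauto), hG.1 c m m' hm', Option.bind_some,
      if_neg (nm_ne hG hline).symm, if_pos rfl]
    unfold relink
    rw [hn', Option.bind_some, if_neg (show ¬(n' = n ∨ n' = m) by tauto)]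
  · show reconnect (G.edge 0) n m n' = some y
    rw [reconnect_e0 hG hline hn'1 hn'2]; exact he0

theorem cross_at_m (hG : isColored G) (hline : G.edge 0 n = some m)
    {n' m' : V} (hn' : G.edge c n = some n') (hm' : G.edge c m = some m')
    (hn'1 : n' ≠ n) (hn'2 : n' ≠ m) (hm'1 : m' ≠ n) (hm'2 : m' ≠ m)
    {xy : V × V} (h : crossedPair G c m = some xy) :
    crossedPair (contractLine G n m) c n' = some xy := by
  obtain ⟨x, y⟩ := xy
  obtain ⟨he, he0⟩ := crossedPair_eq_some.mp h
  have hx : x = m' := by rw [hm'] at he; exact (Option.some.inj he).symm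
  rw [hx] at he0 ⊢
  apply crossedPair_eq_some.mpr
  constructor
  · show reconnect (G.edge c) n m n' = some m'
    rw [reconnect_def, if_neg (by tauto), hG.1 c n n' hn', Option.bind_some, if_pos rfl]
    unfold relink
    rw [hm', Option.bind_some, if_neg (show ¬(m' = n ∨ m' = m) by tauto)]
  · show reconnect (G.edge 0) n m m' = some y
    rw [reconnect_e0 hG hline hm'1 hm'2]; exact he0

omit [DecidableEq V] in
theorem visits_pred_n (hG : isColored G) (hline : G.edge 0 n = some m)
    {m' : V} (hm' : G.edge c m = some m')
    {a : V} (ha : a ≠ n) (h : Visits G c a n) : Visits G c a m' := by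
  obtain ⟨j, hj⟩ := h
  match j, hj with
  | 0, hj => cases hj; exact absurd rfl ha
  | (j0 + 1), hj =>
    rw [iter_succ'] at hj
    obtain ⟨r, hr, hrn⟩ := Option.bind_eq_some_iff.mp hj
    have hstep : faceStep G c m' = some n := by
      rw [show faceStep G c m' = (G.edge c m').bind (G.edge 0) from rfl, hG.1 c m m' hm',
        Option.bind_some, sym0 hG hline]
    have : r = m' := step_inj hG hrn hstep
    exact this ▸ ⟨j0, hr⟩

omit [DecidableEq V] in
theorem visits_pred_m (hG : isColored G) (hline : G.edge 0 n = some m)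
    {n' : V} (hn' : G.edge c n = some n')
    {a : V} (ha : a ≠ m) (h : Visits G c a m) : Visits G c a n' := by
  obtain ⟨j, hj⟩ := h
  match j, hj with
  | 0, hj => cases hj; exact absurd rfl ha
  | (j0 + 1), hj =>
    rw [iter_succ'] at hj
    obtain ⟨r, hr, hrn⟩ := Option.bind_eq_some_iff.mp hj
    have hstep : faceStep G c n' = some m := by
      rw [show faceStep G c n' = (G.edge c n').bind (G.edge 0) from rfl, hG.1 c n n' hn',
        Option.bind_some, hline]
    have : r = n' := step_inj hG hrn hstep
    exact this ▸ ⟨j0, hr⟩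

end Unshared

section Mirror
variable {G : PreGraph d V} {n m : V} {c : Fin (d+1)}

theorem iter_fix {u : V} (h : faceStep G c u = some u) : ∀ t, iterStep G c t u = some u := by
  intro t
  induction t with
  | zero => rfl
  | succ t ih => rw [iter_succ', ih, Option.bind_some, h]

theorem mirror_iter (hG : isColored G) (hc0 : c ≠ 0) {y yh : V} (hy : G.edge c y = some yh) :
    ∀ j (x xh : V), iterStep G c j x = some y → G.edge c x = some xh →
      iterStep G c j yh = some xh := by
  intro j
  induction j with
  | zero =>
    intro x xh h hx
    cases h
    rw [hy] at hx
    cases hx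
    rfl
  | succ j ih =>
    intro x xh h hx
    rw [iter_succ] at h
    obtain ⟨z, hz, hzy⟩ := Option.bind_eq_some_iff.mp h
    obtain ⟨x1, hx1, hx1z⟩ := Option.bind_eq_some_iff.mp hz
    have hx1eq : x1 = xh := by rw [hx] at hx1; exact (Option.some.inj hx1).symm
    subst hx1eq
    have hzv : z ∈ G.verts := (hG.2.1 0 x1 z hx1z).2
    obtain ⟨zh, hzh⟩ := Option.isSome_iff_exists.mp (hG.2.2.2 c hc0 z hzv)
    have hstep : iterStep G c j yh = some zh := ih z zh hzy hzh
    rw [iter_succ', hstep, Option.bind_some]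
    show (G.edge c zh).bind (G.edge 0) = some x1
    rw [hG.1 c z zh hzh, Option.bind_some]
    exact hG.1 0 x1 z hx1z

theorem mirror_cross (hG : isColored G) {v z zh : V} {p : V × V}
    (hsv : faceStep G c v = some z) (hzh : G.edge c z = some zh)
    (hcr : CrossAt G c v p) : CrossAt G c zh p := by
  obtain ⟨⟨x, y⟩, hxy, hpm⟩ := hcr
  obtain ⟨he, he0⟩ := crossedPair_eq_some.mp hxy
  have hzy : z = y := by
    have : faceStep G c v = some y := by
      rw [show faceStep G c v = (G.edge c v).bind (G.edge 0) from rfl, he, Option.bind_some]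
      exact he0
    rw [this] at hsv
    exact (Option.some.inj hsv).symm
  subst hzy
  refine ⟨(z, x), crossedPair_eq_some.mpr ⟨hG.1 c z zh hzh, hG.1 0 x z he0⟩, pairMatch_swap hpm⟩

theorem dip_pair {xy p : V × V} (hpm : pairMatch xy p) (hd : Dip n m p) :
    xy = (n, m) ∨ xy = (m, n) := by
  rcases hd with rfl | rfl
  · rcases hpm with rfl | h
    · exact Or.inl rfl
    · exact Or.inr (by simpa using h)
  · rcases hpm with rfl | h
    · exact Or.inr rfl
    · exact Or.inl (by simpa using h)

end Mirror

section Shared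
variable [DecidableEq V] {G : PreGraph d V} {n m : V} {c : Fin (d+1)}

omit [DecidableEq V] in
theorem shared_fix (hG : isColored G) (hline : G.edge 0 n = some m)
    (hsh : G.edge c n = some m) :
    faceStep G c n = some n ∧ faceStep G c m = some m := by
  constructor
  · rw [show faceStep G c n = (G.edge c n).bind (G.edge 0) from rfl, hsh, Option.bind_some]
    exact sym0 hG hline
  · rw [show faceStep G c m = (G.edge c m).bind (G.edge 0) from rfl, hG.1 c n m hsh,
      Option.bind_some]
    exact hline

omit [DecidableEq V] in
theorem shared_avoid (hG : isColored G) (hline : G.edge 0 n = some m)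
    (hsh : G.edge c n = some m) {a : V} {k : ℕ} (hk : 0 < k)
    (hper : iterStep G c k a = some a) (ha1 : a ≠ n) (ha2 : a ≠ m) :
    ∀ j b, iterStep G c j a = some b → b ≠ n ∧ b ≠ m := by
  intro j b hj
  have hle : j ≤ (j+1)*k := by nlinarith
  have key : ∀ u, faceStep G c u = some u → iterStep G c j a = some u → a = u := by
    intro u hu hju
    have h1 : iterStep G c ((j+1)*k) a = some a := iter_mul G c hper (j+1)
    have h2 : iterStep G c ((j+1)*k) a = some u := by
      rw [show (j+1)*k = j + ((j+1)*k - j) by omega, iter_add, hju, Option.bind_some]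
      exact iter_fix hu _
    rw [h1] at h2
    exact Option.some.inj h2
  constructor
  · intro hb; exact ha1 (key n (shared_fix hG hline hsh).1 (hb ▸ hj))
  · intro hb; exact ha2 (key m (shared_fix hG hline hsh).2 (hb ▸ hj))

end Shared

section Main
variable [DecidableEq V] {G : PreGraph d V} {n m : V} {c : Fin (d+1)}

theorem shared_iter_eq (hG : isColored G) (hline : G.edge 0 n = some m)
    (hsh : G.edge c n = some m) {a : V} {k : ℕ} (hk : 0 < k)
    (hper : iterStep G c k a = some a) (ha1 : a ≠ n) (ha2 : a ≠ m) :
    ∀ j b, iterStep G c j a = some b → iterStep (contractLine G n m) c j a = some b := by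
  intro j
  induction j with
  | zero => intro b hb; exact hb
  | succ j ih =>
    intro b hb
    rw [iter_succ'] at hb
    obtain ⟨r, hr, hrb⟩ := Option.bind_eq_some_iff.mp hb
    have hrnm := shared_avoid hG hline hsh hk hper ha1 ha2 j r hr
    have hbnm := shared_avoid hG hline hsh hk hper ha1 ha2 (j+1) b (by
      rw [iter_succ', hr, Option.bind_some]; exact hrb)
    rw [iter_succ', ih r hr, Option.bind_some, step_sim hG hline hrnm.1 hrnm.2, hrb,
      Option.bind_some, if_neg (show ¬(b = n ∨ b = m) by tauto)]

theorem shared_cross_ne (hG : isColored G) (hline : G.edge 0 n = some m)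
    (hsh : G.edge c n = some m) {b x y : V} (hb1 : b ≠ n) (hb2 : b ≠ m)
    (h : crossedPair G c b = some (x, y)) : x ≠ n ∧ x ≠ m := by
  obtain ⟨he, he0⟩ := crossedPair_eq_some.mp h
  constructor
  · intro hxn
    have h2 : G.edge c n = some b := hG.1 c b n (hxn ▸ he)
    rw [hsh] at h2
    exact hb2 (Option.some.inj h2).symm
  · intro hxm
    have h2 : G.edge c m = some b := hG.1 c b m (hxm ▸ he)
    rw [hG.1 c n m hsh] at h2
    exact hb1 (Option.some.inj h2).symm

theorem shared_pres (hG : isColored G) (hline : G.edge 0 n = some m)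
    (hsh : G.edge c n = some m) {a : V} {k : ℕ} (hk : 0 < k)
    (hper : iterStep G c k a = some a) (ha1 : a ≠ n) (ha2 : a ≠ m) :
    iterStep (contractLine G n m) c k a = some a ∧
    ∀ p b, Visits G c a b → CrossAt G c b p →
      ¬ Dip n m p ∧ ∃ b', Visits (contractLine G n m) c a b' ∧
        CrossAt (contractLine G n m) c b' p := by
  refine ⟨shared_iter_eq hG hline hsh hk hper ha1 ha2 k a hper, ?_⟩
  rintro p b ⟨j, hj⟩ ⟨⟨x, y⟩, hxy, hpm⟩
  have hbnm := shared_avoid hG hline hsh hk hper ha1 ha2 j b hj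
  have hxnm := shared_cross_ne hG hline hsh hbnm.1 hbnm.2 hxy
  refine ⟨?_, b, ⟨j, shared_iter_eq hG hline hsh hk hper ha1 ha2 j b hj⟩,
    ⟨(x, y), cross_G_to_D hG hline hbnm.1 hbnm.2 hxnm.1 hxnm.2 hxy, hpm⟩⟩
  intro hd
  rcases dip_pair hpm hd with h | h
  · exact hxnm.1 (congrArg Prod.fst h)
  · exact hxnm.2 (congrArg Prod.fst h)

theorem shared_diponly (hG : isColored G) (hline : G.edge 0 n = some m)
    (hsh : G.edge c n = some m) {a : V} {k : ℕ} (hk : 0 < k)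
    (hper : iterStep G c k a = some a) {w : V × V} (hdw : Dip n m w)
    (hbw : ∃ b, Visits G c a b ∧ CrossAt G c b w) :
    ∀ p b2, Visits G c a b2 → CrossAt G c b2 p → Dip n m p := by
  obtain ⟨b, hvb, ⟨xy, hxy, hpm⟩⟩ := hbw
  -- the dip-crossing forces the base to be n or m
  have hanm : a = n ∨ a = m := by
    by_contra hcon
    push_neg at hcon
    obtain ⟨j, hj⟩ := hvb
    have hbnm := shared_avoid hG hline hsh hk hper hcon.1 hcon.2 j b hj
    rcases dip_pair hpm hdw with h | h <;> rw [h] at hxy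
    · obtain ⟨he, _⟩ := crossedPair_eq_some.mp hxy
      have h2 : G.edge c n = some b := hG.1 c b n he
      rw [hsh] at h2
      exact hbnm.2 (Option.some.inj h2).symm
    · obtain ⟨he, _⟩ := crossedPair_eq_some.mp hxy
      have h2 : G.edge c m = some b := hG.1 c b m he
      rw [hG.1 c n m hsh] at h2
      exact hbnm.1 (Option.some.inj h2).symm
  intro p b2 hvb2 hcb2
  obtain ⟨j2, hj2⟩ := hvb2
  obtain ⟨xy2, hxy2, hpm2⟩ := hcb2
  rcases hanm with ha | ha
  · have hfix : faceStep G c a = some a := by rw [ha]; exact (shared_fix hG hline hsh).1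
    have hb2 : b2 = a := by
      have hfj := iter_fix hfix j2
      rw [hfj] at hj2
      exact (Option.some.inj hj2).symm
    subst hb2
    obtain ⟨x2, y2⟩ := xy2
    obtain ⟨he, he0⟩ := crossedPair_eq_some.mp hxy2
    rw [ha, hsh] at he
    have hx2 : x2 = m := (Option.some.inj he).symm
    subst hx2
    rw [sym0 hG hline] at he0
    have hy2 : y2 = n := (Option.some.inj he0).symm
    subst hy2
    exact pairMatch_dip (Or.inr hpm2)
  · have hfix : faceStep G c a = some a := by rw [ha]; exact (shared_fix hG hline hsh).2
    have hb2 : b2 = a := by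
      have hfj := iter_fix hfix j2
      rw [hfj] at hj2
      exact (Option.some.inj hj2).symm
    subst hb2
    obtain ⟨x2, y2⟩ := xy2
    obtain ⟨he, he0⟩ := crossedPair_eq_some.mp hxy2
    rw [ha, hG.1 c n m hsh] at he
    have hx2 : x2 = n := (Option.some.inj he).symm
    subst hx2
    rw [hline] at he0
    have hy2 : y2 = m := (Option.some.inj he0).symm
    subst hy2
    exact pairMatch_dip (Or.inl hpm2)

theorem cross_pres (hG : isColored G) (hline : G.edge 0 n = some m)
    (hc0 : c ≠ 0) (hcns : G.edge c n ≠ some m)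
    {a : V} {k : ℕ} (ha1 : a ≠ n) (ha2 : a ≠ m) (hk : 0 < k)
    (hper : iterStep G c k a = some a) :
    (∃ K, 0 < K ∧ iterStep (contractLine G n m) c K a = some a) ∧
    (∀ p b, ¬ Dip n m p → Visits G c a b → CrossAt G c b p →
      ∃ b', Visits (contractLine G n m) c a b' ∧ CrossAt (contractLine G n m) c b' p) := by
  have hnv : n ∈ G.verts := (hG.2.1 0 n m hline).1
  have hmv : m ∈ G.verts := (hG.2.1 0 n m hline).2
  obtain ⟨n', hn'⟩ := Option.isSome_iff_exists.mp (hG.2.2.2 c hc0 n hnv)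
  obtain ⟨m', hm'⟩ := Option.isSome_iff_exists.mp (hG.2.2.2 c hc0 m hmv)
  have hn'1 : n' ≠ n := fun h => hG.2.2.1 c n (h ▸ hn')
  have hn'2 : n' ≠ m := fun h => hcns (h ▸ hn')
  have hm'2 : m' ≠ m := fun h => hG.2.2.1 c m (h ▸ hm')
  have hm'1 : m' ≠ n := fun h => hcns (hG.1 c m n (h ▸ hm'))
  constructor
  · obtain ⟨K, hKpos, hK⟩ := cover hG hline hcns ha1 ha2 k a hper ha1 ha2
    exact ⟨K, hKpos hk, hK⟩
  · intro p b hND hvb hcb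
    obtain ⟨xy, hxy, hpm⟩ := hcb
    by_cases hb1 : b = n
    · subst hb1
      have hvm' : Visits G c a m' := visits_pred_n hG hline hm' ha1 hvb
      obtain ⟨j, hj⟩ := hvm'
      obtain ⟨j', _, hj'⟩ := cover hG hline hcns ha1 ha2 j m' hj hm'1 hm'2
      exact ⟨m', ⟨j', hj'⟩,
        ⟨xy, cross_at_n hG hline hn' hm' hn'1 hn'2 hm'1 hm'2 hxy, hpm⟩⟩
    · by_cases hb2 : b = m
      · subst hb2
        have hvn' : Visits G c a n' := visits_pred_m hG hline hn' ha2 hvb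
        obtain ⟨j, hj⟩ := hvn'
        obtain ⟨j', _, hj'⟩ := cover hG hline hcns ha1 ha2 j n' hj hn'1 hn'2
        exact ⟨n', ⟨j', hj'⟩,
          ⟨xy, cross_at_m hG hline hn' hm' hn'1 hn'2 hm'1 hm'2 hxy, hpm⟩⟩
      · obtain ⟨x, y⟩ := xy
        obtain ⟨he, he0⟩ := crossedPair_eq_some.mp hxy
        have hx1 : x ≠ n := by
          intro h
          rw [h, hline] at he0
          cases he0
          exact hND (pairMatch_dip (Or.inl (h ▸ hpm)))
        have hx2 : x ≠ m := by
          intro h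
          rw [h, sym0 hG hline] at he0
          cases he0
          exact hND (pairMatch_dip (Or.inr (h ▸ hpm)))
        obtain ⟨j, hj⟩ := hvb
        obtain ⟨j', _, hj'⟩ := cover hG hline hcns ha1 ha2 j b hj hb1 hb2
        exact ⟨b, ⟨j', hj'⟩,
          ⟨(x, y), cross_G_to_D hG hline hb1 hb2 hx1 hx2 hxy, hpm⟩⟩

omit [DecidableEq V] in
theorem rebase_off (hG : isColored G) (hline : G.edge 0 n = some m)
    (hcns : G.edge c n ≠ some m)
    {a : V} {k : ℕ} (hk : 0 < k) (hper : iterStep G c k a = some a) :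
    ∃ a', a' ≠ n ∧ a' ≠ m ∧ iterStep G c k a' = some a' ∧
      ∀ b, Visits G c a b → Visits G c a' b := by
  by_cases ha : a = n ∨ a = m
  · obtain ⟨k0, rfl⟩ : ∃ k0, k = k0 + 1 := ⟨k - 1, by omega⟩
    have h1 : iterStep G c (k0 + 1) a = some a := hper
    rw [show k0 + 1 = 1 + k0 by omega, iter_add] at h1
    obtain ⟨w, hw, _⟩ := Option.bind_eq_some_iff.mp h1
    have hw1 : iterStep G c 1 a = some w := hw
    have hwstep : faceStep G c a = some w := by
      have : iterStep G c 1 a = (faceStep G c a).bind (iterStep G c 0) := rfl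
      rw [this] at hw1
      obtain ⟨w2, hw2, hw22⟩ := Option.bind_eq_some_iff.mp hw1
      cases hw22
      exact hw2
    have hwnm := avoid_nm hG hline hcns a w ha hwstep
    refine ⟨w, hwnm.1, hwnm.2, periodic_of_visits hper ⟨1, hw1⟩, ?_⟩
    intro b hvb
    exact visits_rebase (fun x y u hx hy => step_inj hG hx hy) ⟨hk, hper⟩ ⟨1, hw1⟩ hvb
  · push_neg at ha
    exact ⟨a, ha.1, ha.2, hper, fun b h => h⟩

omit [DecidableEq V] in
theorem to_nprime (hG : isColored G) (hline : G.edge 0 n = some m)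
    (hc0 : c ≠ 0) (hcns : G.edge c n ≠ some m)
    {n' m' : V} (hn' : G.edge c n = some n') (hm' : G.edge c m = some m')
    {a : V} {k : ℕ} (hk : 0 < k) (hper : iterStep G c k a = some a)
    {w : V × V} (hdw : Dip n m w) (hbw : ∃ b, Visits G c a b ∧ CrossAt G c b w)
    {p : V × V} (hbp : ∃ b, Visits G c a b ∧ CrossAt G c b p) :
    (0 < k ∧ iterStep G c k n' = some n') ∧ ∃ v, Visits G c n' v ∧ CrossAt G c v p := by
  have hinj : ∀ x y u, faceStep G c x = some u → faceStep G c y = some u → x = y :=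
    fun x y u hx hy => step_inj hG hx hy
  obtain ⟨b1, hvb1, ⟨xy1, hxy1, hpm1⟩⟩ := hbw
  obtain ⟨b2, hvb2, hcb2⟩ := hbp
  rcases dip_pair hpm1 hdw with h | h
  · -- crossing (n, m) at b1 : so edge c b1 = some n, b1 = n'
    rw [h] at hxy1
    obtain ⟨he, _⟩ := crossedPair_eq_some.mp hxy1
    have hb1 : b1 = n' := by
      have h2 : G.edge c n = some b1 := hG.1 c b1 n he
      rw [hn'] at h2
      exact (Option.some.inj h2).symm
    subst hb1
    refine ⟨⟨hk, periodic_of_visits hper hvb1⟩, b2, ?_, hcb2⟩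
    exact visits_rebase hinj ⟨hk, hper⟩ hvb1 hvb2
  · -- crossing (m, n) at b1 : so b1 = m' ; use the mirror face
    rw [h] at hxy1
    obtain ⟨he, _⟩ := crossedPair_eq_some.mp hxy1
    have hb1 : b1 = m' := by
      have h2 : G.edge c m = some b1 := hG.1 c b1 m he
      rw [hm'] at h2
      exact (Option.some.inj h2).symm
    subst hb1
    have hm'per : iterStep G c k b1 = some b1 := periodic_of_visits hper hvb1
    -- step m' → n
    have hstepm' : faceStep G c b1 = some n := by
      rw [show faceStep G c b1 = (G.edge c b1).bind (G.edge 0) from rfl, hG.1 c m b1 hm',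
        Option.bind_some, sym0 hG hline]
    have hvm'n : iterStep G c 1 b1 = some n := by
      rw [iter_succ', iter_zero, Option.bind_some, hstepm']
    -- mirror: 1 step from n' lands on m
    have hvn'm : iterStep G c 1 n' = some m := mirror_iter hG hc0 hn' 1 b1 m hvm'n (hG.1 c m b1 hm')
    -- n periodic, hence n' periodic by mirroring the k-cycle at n
    have hnper : iterStep G c k n = some n := periodic_of_visits hm'per ⟨1, hvm'n⟩
    have hn'per : iterStep G c k n' = some n' := mirror_iter hG hc0 hn' k n n' hnper hn'
    -- mirror the crossing point b2
    have hvm'b2 : Visits G c b1 b2 := visits_rebase hinj ⟨hk, hper⟩ hvb1 hvb2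
    obtain ⟨xy2, hxy2, hpm2⟩ := hcb2
    obtain ⟨x2, y2⟩ := xy2
    obtain ⟨he2, he02⟩ := crossedPair_eq_some.mp hxy2
    have hstepb2 : faceStep G c b2 = some y2 := by
      rw [show faceStep G c b2 = (G.edge c b2).bind (G.edge 0) from rfl, he2,
        Option.bind_some, he02]
    have hy2v : y2 ∈ G.verts := (hG.2.1 0 x2 y2 he02).2
    obtain ⟨z2, hz2⟩ := Option.isSome_iff_exists.mp (hG.2.2.2 c hc0 y2 hy2v)
    have hcrz2 : CrossAt G c z2 p :=
      mirror_cross hG hstepb2 hz2 ⟨(x2, y2), hxy2, hpm2⟩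
    -- z2 reaches m by mirroring the path m' → b2 → y2
    obtain ⟨i, hi⟩ := hvm'b2
    have hiy2 : iterStep G c (i+1) b1 = some y2 := by
      rw [iter_succ', hi, Option.bind_some, hstepb2]
    have hz2m : iterStep G c (i+1) z2 = some m := mirror_iter hG hc0 hz2 (i+1) b1 m hiy2 (hG.1 c m b1 hm')
    -- m is on the cycle of n', so z2 is too
    have hmper : iterStep G c k m = some m := periodic_of_visits hn'per ⟨1, hvn'm⟩
    have hvmz2 : Visits G c m z2 := visits_invert hinj hk hz2m hmper
    exact ⟨⟨hk, hn'per⟩, z2, visits_trans ⟨1, hvn'm⟩ hvmz2, hcrz2⟩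

end Main

section Assemble
variable [DecidableEq V] {G : PreGraph d V} {n m : V} {c : Fin (d+1)}

omit [DecidableEq V] in
theorem shared_base_dip (hG : isColored G) (hline : G.edge 0 n = some m)
    (hsh : G.edge c n = some m) {a : V} (ha : a = n ∨ a = m) :
    ∀ p b2, Visits G c a b2 → CrossAt G c b2 p → Dip n m p := by
  intro p b2 hvb2 hcb2
  obtain ⟨j2, hj2⟩ := hvb2
  obtain ⟨xy2, hxy2, hpm2⟩ := hcb2
  rcases ha with ha | ha
  · have hfix : faceStep G c a = some a := by rw [ha]; exact (shared_fix hG hline hsh).1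
    have hb2 : b2 = a := by
      have hfj := iter_fix hfix j2
      rw [hfj] at hj2
      exact (Option.some.inj hj2).symm
    subst hb2
    obtain ⟨x2, y2⟩ := xy2
    obtain ⟨he, he0⟩ := crossedPair_eq_some.mp hxy2
    rw [ha, hsh] at he
    have hx2 : x2 = m := (Option.some.inj he).symm
    subst hx2
    rw [sym0 hG hline] at he0
    have hy2 : y2 = n := (Option.some.inj he0).symm
    subst hy2
    exact pairMatch_dip (Or.inr hpm2)
  · have hfix : faceStep G c a = some a := by rw [ha]; exact (shared_fix hG hline hsh).2
    have hb2 : b2 = a := by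
      have hfj := iter_fix hfix j2
      rw [hfj] at hj2
      exact (Option.some.inj hj2).symm
    subst hb2
    obtain ⟨x2, y2⟩ := xy2
    obtain ⟨he, he0⟩ := crossedPair_eq_some.mp hxy2
    rw [ha, hG.1 c n m hsh] at he
    have hx2 : x2 = n := (Option.some.inj he).symm
    subst hx2
    rw [hline] at he0
    have hy2 : y2 = m := (Option.some.inj he0).symm
    subst hy2
    exact pairMatch_dip (Or.inl hpm2)

theorem unshared_unique (hdip : shareCount G n m = d - 1)
    {c1 c2 : Fin (d+1)} (h1 : c1 ≠ 0) (h2 : c2 ≠ 0)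
    (g1 : G.edge c1 n ≠ some m) (g2 : G.edge c2 n ≠ some m) : c1 = c2 := by
  classical
  have hd1 : 1 ≤ d := by
    by_contra h
    have hd0 : d = 0 := by omega
    subst hd0
    exact h1 (Fin.ext (by omega))
  have hNcard : (Finset.univ.filter (fun c : Fin (d+1) => c ≠ 0)).card = d := by
    rw [Finset.filter_ne', Finset.card_erase_of_mem (Finset.mem_univ 0)]
    simp
  have hsplit := Finset.card_filter_add_card_filter_not
    (s := Finset.univ.filter (fun c : Fin (d+1) => c ≠ 0))
    (p := fun c => G.edge c n = some m)
  have hfe : ((Finset.univ.filter (fun c : Fin (d+1) => c ≠ 0)).filter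
      (fun c => G.edge c n = some m)).card = d - 1 := by
    rw [Finset.filter_filter]
    rw [← hdip]
    unfold shareCount
    congr 1
  have hTcard : ((Finset.univ.filter (fun c : Fin (d+1) => c ≠ 0)).filter
      (fun c => ¬ G.edge c n = some m)).card = 1 := by omega
  have hc1 : c1 ∈ (Finset.univ.filter (fun c : Fin (d+1) => c ≠ 0)).filter
      (fun c => ¬ G.edge c n = some m) := by
    simp only [Finset.mem_filter, Finset.mem_univ, true_and]
    exact ⟨h1, g1⟩
  have hc2 : c2 ∈ (Finset.univ.filter (fun c : Fin (d+1) => c ≠ 0)).filter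
      (fun c => ¬ G.edge c n = some m) := by
    simp only [Finset.mem_filter, Finset.mem_univ, true_and]
    exact ⟨h2, g2⟩
  exact Finset.card_le_one.mp (le_of_eq hTcard) _ hc1 _ hc2

theorem line_D (hG : isColored G) (hline : G.edge 0 n = some m)
    {p : V × V} (hp : isLine (contractLine G n m) p) : isLine G p ∧ ¬ Dip n m p := by
  have hp' : reconnect (G.edge 0) n m p.1 = some p.2 := hp
  obtain ⟨h1, h2, h3, h4⟩ := reconnect_ne hp'
  constructor
  · show G.edge 0 p.1 = some p.2
    rw [← reconnect_e0 hG hline h1 h2]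
    exact hp'
  · rintro (h | h)
    · exact h1 (congrArg Prod.fst h)
    · exact h2 (congrArg Prod.fst h)

/-- The anchor hypothesis: every non-dipole line lying on a closed face that also
crosses the dipole is related (in the contracted graph) to the anchor line `ℓ0`. -/
def AnchProp (G : PreGraph d V) (n m : V) (ℓ0 : V × V) : Prop :=
  ∀ x : V × V, ¬ Dip n m x →
    (∃ (c : Fin (d+1)) (a : V) (k : ℕ), c ≠ 0 ∧ G.edge c n ≠ some m ∧ 0 < k ∧
      iterStep G c k a = some a ∧
      (∃ w, Dip n m w ∧ ∃ b, Visits G c a b ∧ CrossAt G c b w) ∧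
      (∃ b, Visits G c a b ∧ CrossAt G c b x)) →
    Relation.EqvGen (WholeFaceRel (contractLine G n m)) x ℓ0

open Classical in
noncomputable def rho (n m : V) (ℓ0 t : V × V) : V × V := if Dip n m t then ℓ0 else t

omit [DecidableEq V] in
theorem rho_pos {n m : V} {ℓ0 t : V × V} (h : Dip n m t) : rho n m ℓ0 t = ℓ0 := by
  rw [rho, if_pos h]

omit [DecidableEq V] in
theorem rho_neg {n m : V} {ℓ0 t : V × V} (h : ¬ Dip n m t) : rho n m ℓ0 t = t := by
  rw [rho, if_neg h]

theorem step_main (hG : isColored G) (hline : G.edge 0 n = some m)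
    {ℓ0 : V × V} (hanch : AnchProp G n m ℓ0)
    {x y : V × V} (hrel : WholeFaceRel G x y) :
    Relation.EqvGen (WholeFaceRel (contractLine G n m))
      (rho n m ℓ0 x) (rho n m ℓ0 y) := by
  classical
  obtain ⟨c, hc0, a, k, hcf, hfx, hfy⟩ := hrel
  obtain ⟨hk, hper⟩ := hcf
  obtain ⟨bx, hvbx, hcbx⟩ := (faceCrosses_iff ⟨hk, hper⟩ x).mp hfx
  obtain ⟨by', hvby, hcby⟩ := (faceCrosses_iff ⟨hk, hper⟩ y).mp hfy
  by_cases hsh : G.edge c n = some m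
  · -- shared color
    by_cases ha : a = n ∨ a = m
    · -- all crossings are the dipole
      have hxD : Dip n m x := shared_base_dip hG hline hsh ha x bx hvbx hcbx
      have hyD : Dip n m y := shared_base_dip hG hline hsh ha y by' hvby hcby
      rw [rho_pos hxD, rho_pos hyD]
      exact Relation.EqvGen.refl _
    · push_neg at ha
      obtain ⟨hDper, hDcross⟩ := shared_pres hG hline hsh hk hper ha.1 ha.2
      obtain ⟨hxND, bx', hvbx', hcbx'⟩ := hDcross x bx hvbx hcbx
      obtain ⟨hyND, by'', hvby', hcby'⟩ := hDcross y by' hvby hcby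
      rw [rho_neg hxND, rho_neg hyND]
      refine Relation.EqvGen.rel _ _ ⟨c, hc0, a, k, ⟨hk, hDper⟩, ?_, ?_⟩
      · exact (faceCrosses_iff ⟨hk, hDper⟩ x).mpr ⟨bx', hvbx', hcbx'⟩
      · exact (faceCrosses_iff ⟨hk, hDper⟩ y).mpr ⟨by'', hvby', hcby'⟩
  · -- unshared color
    by_cases hxD : Dip n m x
    · by_cases hyD : Dip n m y
      · rw [rho_pos hxD, rho_pos hyD]
        exact Relation.EqvGen.refl _
      · rw [rho_pos hxD, rho_neg hyD]
        exact (hanch y hyD ⟨c, a, k, hc0, hsh, hk, hper,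
          ⟨x, hxD, bx, hvbx, hcbx⟩, ⟨by', hvby, hcby⟩⟩).symm _ _
    · by_cases hyD : Dip n m y
      · rw [rho_neg hxD, rho_pos hyD]
        exact hanch x hxD ⟨c, a, k, hc0, hsh, hk, hper,
          ⟨y, hyD, by', hvby, hcby⟩, ⟨bx, hvbx, hcbx⟩⟩
      · rw [rho_neg hxD, rho_neg hyD]
        obtain ⟨a', ha1, ha2, hper', hvis⟩ := rebase_off hG hline hsh hk hper
        obtain ⟨⟨K, hKpos, hK⟩, hDcross⟩ := cross_pres hG hline hc0 hsh ha1 ha2 hk hper'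
        obtain ⟨bx', hvbx', hcbx'⟩ := hDcross x bx hxD (hvis bx hvbx) hcbx
        obtain ⟨by'', hvby', hcby'⟩ := hDcross y by' hyD (hvis by' hvby) hcby
        refine Relation.EqvGen.rel _ _ ⟨c, hc0, a', K, ⟨hKpos, hK⟩, ?_, ?_⟩
        · exact (faceCrosses_iff ⟨hKpos, hK⟩ x).mpr ⟨bx', hvbx', hcbx'⟩
        · exact (faceCrosses_iff ⟨hKpos, hK⟩ y).mpr ⟨by'', hvby', hcby'⟩

theorem eqvgen_map (hG : isColored G) (hline : G.edge 0 n = some m)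
    {ℓ0 : V × V} (hanch : AnchProp G n m ℓ0)
    {p q : V × V} (hpND : ¬ Dip n m p) (hqND : ¬ Dip n m q)
    (h : Relation.EqvGen (WholeFaceRel G) p q) :
    Relation.EqvGen (WholeFaceRel (contractLine G n m)) p q := by
  classical
  have main : ∀ x y, Relation.EqvGen (WholeFaceRel G) x y →
      Relation.EqvGen (WholeFaceRel (contractLine G n m))
        (rho n m ℓ0 x) (rho n m ℓ0 y) := by
    intro x y hxy
    induction hxy with
    | rel _ _ hr => exact step_main hG hline hanch hr
    | refl z => exact Relation.EqvGen.refl _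
    | symm _ _ _ ih => exact ih.symm _ _
    | trans _ _ _ _ _ ih1 ih2 => exact ih1.trans _ _ _ ih2
  have := main p q h
  rwa [rho_neg hpND, rho_neg hqND] at this

end Assemble

end TG

/-- **Contraction of a `d`-dipole preserves connectedness**: if `G` is connected (in the
tensorial, line–face incidence sense) and the line `(n, m)` is a `d`-dipole (its two end
nodes are joined by exactly `d - 1` additional colored lines), then `G/e` is connected. -/
theorem d_dipole_contraction_preserves_connectedness {d : ℕ} {V : Type} [DecidableEq V]
    (G : PreGraph d V) (hG : isColored G) (hconn : GraphConnected G)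
    (n m : V) (hline : G.edge 0 n = some m)
    (hdip : shareCount G n m = d - 1) :
    GraphConnected (contractLine G n m) := by
  classical
  intro p q hp hq
  obtain ⟨hpG, hpND⟩ := TG.line_D hG hline hp
  obtain ⟨hqG, hqND⟩ := TG.line_D hG hline hq
  have hEq := hconn p q hpG hqG
  by_cases hH : ∃ (c : Fin (d+1)) (a : V) (k : ℕ) (z : V × V), c ≠ 0 ∧
      G.edge c n ≠ some m ∧ 0 < k ∧ iterStep G c k a = some a ∧
      (∃ w, TG.Dip n m w ∧ ∃ b, TG.Visits G c a b ∧ TG.CrossAt G c b w) ∧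
      (¬ TG.Dip n m z) ∧ (∃ b, TG.Visits G c a b ∧ TG.CrossAt G c b z)
  · obtain ⟨c0, a0, k0, z0, hc00, hcns0, hk0, hper0, hdw0, hz0ND, hbz0⟩ := hH
    have hanch : TG.AnchProp G n m z0 := by
      rintro x hxND ⟨c, a, k, hc0, hcns, hk, hper, hdw, hbx⟩
      have hceq : c0 = c := TG.unshared_unique hdip hc00 hc0 hcns0 hcns
      subst hceq
      have hnv : n ∈ G.verts := (hG.2.1 0 n m hline).1
      have hmv : m ∈ G.verts := (hG.2.1 0 n m hline).2
      obtain ⟨n', hn'⟩ := Option.isSome_iff_exists.mp (hG.2.2.2 c0 hc0 n hnv)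
      obtain ⟨m', hm'⟩ := Option.isSome_iff_exists.mp (hG.2.2.2 c0 hc0 m hmv)
      have hn'1 : n' ≠ n := fun h => hG.2.2.1 c0 n (h ▸ hn')
      have hn'2 : n' ≠ m := fun h => hcns (h ▸ hn')
      obtain ⟨w, hdw', hbw⟩ := hdw
      obtain ⟨⟨hk1, hn'per⟩, v, hvv, hcv⟩ :=
        TG.to_nprime hG hline hc0 hcns hn' hm' hk hper hdw' hbw hbx
      obtain ⟨w0, hdw0', hbw0'⟩ := hdw0
      obtain ⟨_, v0, hvv0, hcv0⟩ :=
        TG.to_nprime hG hline hc0 hcns hn' hm' hk0 hper0 hdw0' hbw0' hbz0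
      obtain ⟨⟨K, hKpos, hK⟩, hDcross⟩ :=
        TG.cross_pres hG hline hc0 hcns hn'1 hn'2 hk1 hn'per
      obtain ⟨v', hvv', hcv'⟩ := hDcross x v hxND hvv hcv
      obtain ⟨v0', hvv0', hcv0'⟩ := hDcross z0 v0 hz0ND hvv0 hcv0
      exact Relation.EqvGen.rel _ _ ⟨c0, hc0, n', K, ⟨hKpos, hK⟩,
        (TG.faceCrosses_iff ⟨hKpos, hK⟩ x).mpr ⟨v', hvv', hcv'⟩,
        (TG.faceCrosses_iff ⟨hKpos, hK⟩ z0).mpr ⟨v0', hvv0', hcv0'⟩⟩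
    exact TG.eqvgen_map hG hline hanch hpND hqND hEq
  · have hanch : TG.AnchProp G n m p := by
      rintro x hxND ⟨c, a, k, hc0, hcns, hk, hper, hdw, hbx⟩
      exact absurd ⟨c, a, k, x, hc0, hcns, hk, hper, hdw, hxND, hbx⟩ hH
    exact TG.eqvgen_map hG hline hanch hpND hqND hEq
end
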